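/- arXiv:1006.3464 — 3 statements merged into one kernel-verified Lean document; each statement's English description precedes it below -/
import Mathlib

section
/- For R = ℤ/2 and the involution * exchanging the two generators α, β of the free monoid A, the ring (ℤ[A], ⊙) with Banică's product x ⊙ y = Σ_{x=ag, y=g*b} ab is isomorphic as a ring to the free (non-commutative) unital ℤ-algebra on two generators, via a filtration-preserving isomorphism sending α and β to the generators. -/
/-- The anti-endomorphism `*` on words: `(r_1 … r_k)* = (σ r_k) … (σ r_1)`. -/
def starWord {R : Type*} (σ : R → R) (t : List R) : List R := (t.map σ).reverse

/-- Two words are linked, `t ∼ t'`, if `t* = t'` or `t'* = t`. -/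
def linked {R : Type*} (σ : R → R) (t t' : List R) : Prop :=
  starWord σ t = t' ∨ starWord σ t' = t

instance {R : Type*} [DecidableEq R] (σ : R → R) (t t' : List R) :
    Decidable (linked σ t t') :=
  inferInstanceAs (Decidable (_ ∨ _))

/-- Banică-type product of two words in `ℤ[A_R]`: the sum of `a b` over all
factorizations `r = a t`, `s = t' b` with `t ∼ t'`. -/
noncomputable def wordProd {R : Type*} [DecidableEq R] (σ : R → R) (r s : List R) :
    (List R →₀ ℤ) :=
  ∑ p ∈ Finset.range (r.length + 1) ×ˢ Finset.range (s.length + 1),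
    if linked σ (r.drop (r.length - p.1)) (s.take p.2)
    then Finsupp.single (r.take (r.length - p.1) ++ s.drop p.2) (1 : ℤ)
    else 0

/-- The bilinear extension `⊙` of the word product to the monoid ring `ℤ[A_R]`. -/
noncomputable def odot {R : Type*} [DecidableEq R] (σ : R → R) (x y : List R →₀ ℤ) :
    (List R →₀ ℤ) :=
  x.sum fun r cr => y.sum fun s cs => (cr * cs) • wordProd σ r s

set_option linter.unusedSectionVars false

section Aux
variable {R : Type*} [DecidableEq R] {σ : R → R}

@[simp] lemma starWord_length (t : List R) : (starWord σ t).length = t.length := by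
  simp [starWord]

lemma starWord_starWord (hσ : Function.Involutive σ) (t : List R) :
    starWord σ (starWord σ t) = t := by
  simp [starWord, List.map_reverse, List.map_map, Function.comp_def, hσ _]

@[simp] lemma starWord_nil : starWord σ ([] : List R) = [] := rfl

lemma starWord_cons (a : R) (r : List R) :
    starWord σ (a :: r) = starWord σ r ++ [σ a] := by
  simp [starWord]

@[simp] lemma starWord_single (a : R) : starWord σ [a] = [σ a] := rfl

lemma linked_iff (hσ : Function.Involutive σ) (t t' : List R) :
    linked σ t t' ↔ t' = starWord σ t := by
  unfold linked
  constructor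
  · rintro (h | h)
    · exact h.symm
    · rw [← h, starWord_starWord hσ]
  · rintro rfl; exact Or.inl rfl

lemma linked_length {t t' : List R} (h : linked σ t t') : t.length = t'.length := by
  rcases h with h | h
  · rw [← h, starWord_length]
  · rw [← h, starWord_length]

lemma wordProd_eq (hσ : Function.Involutive σ) (r s : List R) :
    wordProd σ r s = ∑ m ∈ Finset.range (r.length + 1),
      if s.take m = starWord σ (r.drop (r.length - m))
      then Finsupp.single (r.take (r.length - m) ++ s.drop m) (1 : ℤ)
      else 0 := by
  unfold wordProd
  rw [Finset.sum_product]
  refine Finset.sum_congr rfl fun i hi => ?_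
  rw [Finset.mem_range] at hi
  have hlen : (r.drop (r.length - i)).length = i := by
    rw [List.length_drop]; omega
  rw [Finset.sum_eq_single i]
  · simp only [linked_iff hσ]
  · intro j hj hji
    rw [Finset.mem_range] at hj
    rw [if_neg]
    intro hl
    have := linked_length hl
    rw [hlen, List.length_take] at this
    omega
  · intro hj
    rw [Finset.mem_range, not_lt] at hj
    rw [if_neg]
    intro hl
    have := linked_length hl
    rw [hlen, List.length_take] at this
    omega

lemma wordProd_nil (hσ : Function.Involutive σ) (s : List R) :
    wordProd σ [] s = Finsupp.single s (1 : ℤ) := by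
  rw [wordProd_eq hσ]; simp

lemma take_succ_eq_append {s t : List R} {x : R} {L : ℕ} (hL : t.length = L) :
    s.take (L + 1) = t ++ [x] ↔ (s.take L = t ∧ (s.drop L).take 1 = [x]) := by
  rw [List.take_add]
  constructor
  · intro h
    have hlen : (s.take L).length + ((s.drop L).take 1).length = L + 1 := by
      have := congrArg List.length h
      simpa [hL] using this
    have h1 : (s.take L).length = L := by
      have a1 : (s.take L).length = min L s.length := List.length_take
      have a2 : ((s.drop L).take 1).length = min 1 (s.drop L).length := List.length_take
      omega
    exact List.append_inj h (h1.trans hL.symm)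
  · rintro ⟨h1, h2⟩
    rw [h1, h2]

lemma wordProd_cons (hσ : Function.Involutive σ) (a : R) (r s : List R) :
    wordProd σ (a :: r) s =
      Finsupp.mapDomain (List.cons a) (wordProd σ r s) +
      (if s.take (r.length + 1) = starWord σ (a :: r)
       then Finsupp.single (s.drop (r.length + 1)) (1 : ℤ) else 0) := by
  rw [wordProd_eq hσ, wordProd_eq hσ]
  have hlc : (a :: r).length = r.length + 1 := rfl
  rw [hlc, Finset.sum_range_succ]
  congr 1
  · conv_rhs => rw [← Finsupp.mapDomain.addMonoidHom_apply]
    rw [map_sum]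
    refine Finset.sum_congr rfl fun m hm => ?_
    rw [Finset.mem_range] at hm
    have h1 : r.length + 1 - m = (r.length - m) + 1 := by omega
    have h2 : (a :: r).drop (r.length + 1 - m) = r.drop (r.length - m) := by
      rw [h1]; rfl
    have h3 : (a :: r).take (r.length + 1 - m) = a :: r.take (r.length - m) := by
      rw [h1]; rfl
    rw [h2, h3]
    simp only [Finsupp.mapDomain.addMonoidHom_apply]
    split_ifs
    · rw [Finsupp.mapDomain_single]; rfl
    · rw [Finsupp.mapDomain_zero]
  · simp

lemma wordProd_one (hσ : Function.Involutive σ) (a : R) (s : List R) :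
    wordProd σ [a] s = Finsupp.single (a :: s) (1 : ℤ) +
      (if s.take 1 = [σ a] then Finsupp.single (s.drop 1) (1 : ℤ) else 0) := by
  rw [wordProd_eq hσ]
  simp [Finset.sum_range_succ]

noncomputable def Ew (σ : R → R) [DecidableEq R] : List R → MonoidAlgebra ℤ (FreeMonoid R)
  | [] => 1
  | a :: w => MonoidAlgebra.single (FreeMonoid.of a) 1 * Ew σ w -
      (if w.take 1 = [σ a] then Ew σ (w.drop 1) else 0)
termination_by t => t.length
decreasing_by
  · simp
  · simp [List.length_drop]

lemma Ew_nil : Ew σ ([] : List R) = 1 := by rw [Ew]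

lemma Ew_cons (a : R) (w : List R) :
    Ew σ (a :: w) = MonoidAlgebra.single (FreeMonoid.of a) 1 * Ew σ w -
      (if w.take 1 = [σ a] then Ew σ (w.drop 1) else 0) := by rw [Ew]

lemma lc_ite_single {M : Type*} [AddCommMonoid M] [Module ℤ M]
    (v : List R → M) (c : Prop) [Decidable c] (u : List R) :
    Finsupp.linearCombination ℤ v (if c then Finsupp.single u (1 : ℤ) else 0) =
      if c then v u else 0 := by
  split <;> simp

lemma lc_mulsub (a : R) (z : List R →₀ ℤ) :
    Finsupp.linearCombination ℤ (fun w => Ew σ (a :: w)) z =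
      MonoidAlgebra.single (FreeMonoid.of a) 1 * Finsupp.linearCombination ℤ (Ew σ) z -
      Finsupp.linearCombination ℤ
        (fun w => if w.take 1 = [σ a] then Ew σ (w.drop 1) else 0) z := by
  simp only [Finsupp.linearCombination_apply]
  rw [Finsupp.mul_sum, ← Finsupp.sum_sub]
  refine Finsupp.sum_congr fun w hw => ?_
  rw [Ew_cons, smul_sub, mul_smul_comm]

lemma lemC (hσ : Function.Involutive σ) (a : R) (r s : List R) :
    Finsupp.linearCombination ℤ
        (fun w => if w.take 1 = [σ a] then Ew σ (w.drop 1) else 0) (wordProd σ r s) =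
      (if r.take 1 = [σ a]
       then Finsupp.linearCombination ℤ (Ew σ) (wordProd σ (r.drop 1) s) else 0) +
      (if s.take (r.length + 1) = starWord σ r ++ [σ a]
       then Ew σ (s.drop (r.length + 1)) else 0) := by
  cases r with
  | nil =>
      rw [wordProd_nil hσ]
      rw [Finsupp.linearCombination_single]
      simp
  | cons h r'' =>
      rw [wordProd_eq hσ]
      rw [map_sum]
      simp only [lc_ite_single]
      have hlc : (h :: r'').length = r''.length + 1 := rfl
      rw [hlc, Finset.sum_range_succ]
      have hmain : ∀ m ∈ Finset.range (r''.length + 1),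
          (if s.take m = starWord σ ((h :: r'').drop (r''.length + 1 - m))
           then (fun w => if w.take 1 = [σ a] then Ew σ (w.drop 1) else 0)
                ((h :: r'').take (r''.length + 1 - m) ++ s.drop m)
           else 0) =
          (if [h] = [σ a] then
            (if s.take m = starWord σ (r''.drop (r''.length - m))
             then Ew σ (r''.take (r''.length - m) ++ s.drop m) else 0) else 0) := by
        intro m hm
        rw [Finset.mem_range] at hm
        have h1 : r''.length + 1 - m = (r''.length - m) + 1 := by omega
        have h2 : (h :: r'').drop (r''.length + 1 - m) = r''.drop (r''.length - m) := by
          rw [h1]; rfl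
        have h3 : (h :: r'').take (r''.length + 1 - m) = h :: r''.take (r''.length - m) := by
          rw [h1]; rfl
        rw [h2, h3]
        by_cases hd : [h] = [σ a]
        · simp [hd]
        · have : (h :: (r''.take (r''.length - m) ++ s.drop m)).take 1 ≠ [σ a] := by
            simpa using hd
          simp only [List.cons_append, this, if_false, hd, if_false]
          simp
      rw [Finset.sum_congr rfl hmain]
      by_cases hd : [h] = [σ a]
      · simp only [hd, if_pos rfl]
        have hfirst : (h :: r'').take 1 = [σ a] := by simpa using hd
        rw [if_pos hfirst]
        have hdrop : (h :: r'').drop 1 = r'' := rfl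
        rw [hdrop, wordProd_eq hσ, map_sum]
        simp only [lc_ite_single]
        congr 1
        -- last terms equal
        have hlen : (starWord σ (h :: r'')).length = r''.length + 1 := by simp
        have hsplit := take_succ_eq_append (s := s) (x := σ a)
          (t := starWord σ (h :: r'')) hlen
        have hdd : (s.drop (r''.length + 1)).drop 1 = s.drop (r''.length + 1 + 1) := by
          rw [List.drop_drop]
        rw [starWord_cons] at hsplit
        simp only [List.drop_zero, List.take_zero, List.nil_append,
          Nat.sub_self, starWord_cons]
        rw [hdd]
        by_cases hc1 : s.take (r''.length + 1) = starWord σ r'' ++ [σ h]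
        · by_cases hc2 : (s.drop (r''.length + 1)).take 1 = [σ a]
          · rw [if_pos hc1, if_pos hc2, if_pos (hsplit.mpr ⟨hc1, hc2⟩)]
          · rw [if_pos hc1, if_neg hc2, if_neg]
            intro hc
            exact hc2 (hsplit.mp hc).2
        · rw [if_neg hc1, if_neg]
          intro hc
          exact hc1 (hsplit.mp hc).1
      · simp only [hd, if_false]
        have hfirst : ¬ ((h :: r'').take 1 = [σ a]) := by simpa using hd
        rw [if_neg hfirst]
        simp only [Finset.sum_const_zero, zero_add]
        -- last term: (s.drop ..).take 1 = [σ a] combined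
        have hlen : (starWord σ (h :: r'')).length = r''.length + 1 := by simp
        have hsplit := take_succ_eq_append (s := s) (x := σ a)
          (t := starWord σ (h :: r'')) hlen
        have hdd : (s.drop (r''.length + 1)).drop 1 = s.drop (r''.length + 1 + 1) := by
          rw [List.drop_drop]
        simp only [List.drop_zero, List.take_zero, List.nil_append, Nat.sub_self]
        rw [hdd]
        by_cases hc1 : s.take (r''.length + 1) = starWord σ (h :: r'')
        · by_cases hc2 : (s.drop (r''.length + 1)).take 1 = [σ a]
          · rw [if_pos hc1, if_pos hc2, if_pos]
            rw [hsplit]; exact ⟨hc1, hc2⟩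
          · rw [if_pos hc1, if_neg hc2, if_neg]
            intro hc; rw [hsplit] at hc; exact hc2 hc.2
        · rw [if_neg hc1, if_neg]
          intro hc; rw [hsplit] at hc; exact hc1 hc.1

lemma key_aux (hσ : Function.Involutive σ) :
    ∀ n (r s : List R), r.length ≤ n →
      Finsupp.linearCombination ℤ (Ew σ) (wordProd σ r s) = Ew σ r * Ew σ s := by
  intro n
  induction n with
  | zero =>
      intro r s hr
      have hr0 : r = [] := List.eq_nil_of_length_eq_zero (Nat.le_zero.mp hr)
      subst hr0
      rw [wordProd_nil hσ, Finsupp.linearCombination_single, one_smul, Ew_nil, one_mul]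
  | succ n ih =>
      intro r s hr
      cases r with
      | nil =>
          rw [wordProd_nil hσ, Finsupp.linearCombination_single, one_smul, Ew_nil, one_mul]
      | cons a r' =>
          have h1 : r'.length ≤ n := by
            simp only [List.length_cons] at hr; omega
          have h2 : (r'.drop 1).length ≤ n := by
            rw [List.length_drop]; omega
          rw [wordProd_cons hσ, map_add, Finsupp.linearCombination_mapDomain, lc_ite_single]
          have hcomp : (Ew σ ∘ List.cons a) = fun w => Ew σ (a :: w) := rfl
          rw [hcomp, lc_mulsub, lemC hσ, ih r' s h1, ih (r'.drop 1) s h2, Ew_cons,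
            starWord_cons, sub_mul, ite_mul, zero_mul, mul_assoc]
          abel

lemma Emap_odot (hσ : Function.Involutive σ) (x y : List R →₀ ℤ) :
    Finsupp.linearCombination ℤ (Ew σ) (odot σ x y) =
      Finsupp.linearCombination ℤ (Ew σ) x * Finsupp.linearCombination ℤ (Ew σ) y := by
  have hW : ∀ (r s : List R),
      Finsupp.linearCombination ℤ (Ew σ) (wordProd σ r s) = Ew σ r * Ew σ s :=
    fun r s => key_aux hσ r.length r s le_rfl
  unfold odot
  calc (Finsupp.linearCombination ℤ (Ew σ))
        (x.sum fun r cr => y.sum fun s cs => (cr * cs) • wordProd σ r s)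
      = x.sum fun r cr => y.sum fun s cs => (cr * cs) • (Ew σ r * Ew σ s) := by
        rw [map_finsuppSum]
        refine Finsupp.sum_congr fun r hr => ?_
        rw [map_finsuppSum]
        refine Finsupp.sum_congr fun s hs => ?_
        rw [map_smul, hW]
    _ = _ := by
        rw [Finsupp.linearCombination_apply, Finsupp.linearCombination_apply,
          Finsupp.sum_mul]
        refine Finsupp.sum_congr fun r hr => ?_
        rw [Finsupp.mul_sum]
        refine Finsupp.sum_congr fun s hs => ?_
        rw [mul_smul, smul_mul_assoc, mul_smul_comm]

noncomputable def Dw (σ : R → R) [DecidableEq R] : List R → (List R →₀ ℤ)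
  | [] => Finsupp.single [] 1
  | a :: w => odot σ (Finsupp.single [a] (1 : ℤ)) (Dw σ w)

lemma odot_single_left (r : List R) (y : List R →₀ ℤ) :
    odot σ (Finsupp.single r (1 : ℤ)) y =
      Finsupp.linearCombination ℤ (wordProd σ r) y := by
  unfold odot
  rw [Finsupp.sum_single_index]
  · simp [Finsupp.linearCombination_apply]
  · simp

noncomputable def Dmap (σ : R → R) [DecidableEq R] :
    MonoidAlgebra ℤ (FreeMonoid R) →ₗ[ℤ] (List R →₀ ℤ) :=
  (Finsupp.linearCombination ℤ (fun w : FreeMonoid R => Dw σ w.toList)).comp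
    (MonoidAlgebra.coeffLinearEquiv ℤ).toLinearMap

lemma lc_MA_single {M : Type*} [AddCommMonoid M] [Module ℤ M]
    (v : FreeMonoid R → M) (u : FreeMonoid R) (c : ℤ) :
    Finsupp.linearCombination ℤ v (MonoidAlgebra.single u c).coeff = c • v u :=
  Finsupp.linearCombination_single _ _ _

lemma MA_single_mul (u v : FreeMonoid R) (b c : ℤ) :
    (MonoidAlgebra.single u b : MonoidAlgebra ℤ (FreeMonoid R)) * MonoidAlgebra.single v c =
      MonoidAlgebra.single (u * v) (b * c) := MonoidAlgebra.single_mul_single ..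

lemma Dmap_MA_single (u : FreeMonoid R) (c : ℤ) :
    Dmap σ (MonoidAlgebra.single u c) = c • Dw σ u.toList := by
  show Finsupp.linearCombination ℤ _ (Finsupp.single u c) = _
  exact Finsupp.linearCombination_single _ _ _

lemma Dmap_fin_single (u : FreeMonoid R) (c : ℤ) :
    Dmap σ (MonoidAlgebra.single u c) = c • Dw σ u.toList := by
  show Finsupp.linearCombination ℤ _ (Finsupp.single u c) = _
  exact Finsupp.linearCombination_single _ _ _

lemma Dmap_single_mul (a : R) (m : MonoidAlgebra ℤ (FreeMonoid R)) :
    Dmap σ (MonoidAlgebra.single (FreeMonoid.of a) 1 * m) =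
      Finsupp.linearCombination ℤ (wordProd σ [a]) (Dmap σ m) := by
  induction m using MonoidAlgebra.induction_linear with
  | zero => simp
  | add f g hf hg => rw [mul_add, map_add, hf, hg, map_add, map_add]
  | single u c =>
      rw [show ((MonoidAlgebra.single (FreeMonoid.of a) (1 : ℤ) :
            MonoidAlgebra ℤ (FreeMonoid R)) * MonoidAlgebra.single u c) =
          MonoidAlgebra.single (FreeMonoid.of a * u) c by
        rw [MA_single_mul, one_mul]]
      rw [Dmap_MA_single, Dmap_fin_single, map_smul]
      congr 1
      have htl : (FreeMonoid.of a * u).toList = a :: u.toList := by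
        rw [FreeMonoid.toList_mul, FreeMonoid.toList_of]; rfl
      rw [htl]
      show Dw σ (a :: u.toList) = _
      rw [Dw, odot_single_left]

lemma DE (hσ : Function.Involutive σ) :
    ∀ n (w : List R), w.length ≤ n →
      Dmap σ (Ew σ w) = Finsupp.single w (1 : ℤ) := by
  intro n
  induction n with
  | zero =>
      intro w hw
      have hw0 : w = [] := List.eq_nil_of_length_eq_zero (Nat.le_zero.mp hw)
      subst hw0
      rw [Ew_nil, MonoidAlgebra.one_def, Dmap_MA_single, one_smul,
        FreeMonoid.toList_one, Dw]
  | succ n ih =>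
      intro w hw
      cases w with
      | nil =>
          rw [Ew_nil, MonoidAlgebra.one_def, Dmap_MA_single, one_smul,
            FreeMonoid.toList_one, Dw]
      | cons a w' =>
          have h1 : w'.length ≤ n := by
            simp only [List.length_cons] at hw; omega
          have h2 : (w'.drop 1).length ≤ n := by
            rw [List.length_drop]; omega
          rw [Ew_cons, map_sub, Dmap_single_mul, ih w' h1]
          have hite : Dmap σ (if w'.take 1 = [σ a] then Ew σ (w'.drop 1) else 0) =
              (if w'.take 1 = [σ a] then Finsupp.single (w'.drop 1) (1 : ℤ) else 0) := by
            split
            · exact ih _ h2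
            · exact map_zero _
          rw [hite, Finsupp.linearCombination_single, one_smul, wordProd_one hσ]
          abel

lemma ED (hσ : Function.Involutive σ) (w : List R) :
    Finsupp.linearCombination ℤ (Ew σ) (Dw σ w) =
      MonoidAlgebra.single (FreeMonoid.ofList w) (1 : ℤ) := by
  induction w with
  | nil =>
      show Finsupp.linearCombination ℤ (Ew σ) (Finsupp.single [] 1) = _
      rw [Finsupp.linearCombination_single, one_smul, Ew_nil, MonoidAlgebra.one_def]
      rfl
  | cons a w ihw =>
      show Finsupp.linearCombination ℤ (Ew σ)
        (odot σ (Finsupp.single [a] (1 : ℤ)) (Dw σ w)) = _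
      rw [Emap_odot hσ, ihw, Finsupp.linearCombination_single, one_smul]
      have hEa : Ew σ [a] = MonoidAlgebra.single (FreeMonoid.of a) 1 := by
        rw [Ew_cons, Ew_nil, mul_one, if_neg (by simp), sub_zero]
      rw [hEa, MonoidAlgebra.single_mul_single, one_mul]
      congr 1

lemma Dw_support (hσ : Function.Involutive σ) :
    ∀ w : List R, ∀ u ∈ (Dw σ w).support, u.length ≤ w.length := by
  intro w
  induction w with
  | nil =>
      intro u hu
      have h := Finsupp.support_single_subset hu
      simp only [Finset.mem_singleton] at h
      subst h; simp
  | cons a w ihw =>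
      intro u hu
      rw [show Dw σ (a :: w) = odot σ (Finsupp.single [a] (1 : ℤ)) (Dw σ w) from by
        rw [Dw], odot_single_left, Finsupp.linearCombination_apply] at hu
      have h1 := Finsupp.support_sum hu
      rw [Finset.mem_biUnion] at h1
      obtain ⟨s, hs, hu2⟩ := h1
      have hu3 : u ∈ (wordProd σ [a] s).support := Finsupp.support_smul hu2
      rw [wordProd_one hσ] at hu3
      have h2 := Finsupp.support_add hu3
      rw [Finset.mem_union] at h2
      have hsl : s.length ≤ w.length := ihw s hs
      rcases h2 with h2 | h2
      · have h3 := Finsupp.support_single_subset h2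
        simp only [Finset.mem_singleton] at h3
        subst h3
        simp only [List.length_cons]
        omega
      · split at h2
        · have h3 := Finsupp.support_single_subset h2
          simp only [Finset.mem_singleton] at h3
          subst h3
          rw [List.length_drop, List.length_cons]
          omega
        · simp at h2

lemma Ew_support :
    ∀ n (w : List R), w.length ≤ n →
      ∀ u ∈ (Ew σ w).coeff.support, (FreeMonoid.toList u).length ≤ w.length := by
  letI : DecidableEq (FreeMonoid R) := inferInstanceAs (DecidableEq (List R))
  have hnil : ∀ u ∈ (Ew σ ([] : List R)).coeff.support,
      (FreeMonoid.toList u).length ≤ ([] : List R).length := by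
    intro u hu
    rw [Ew_nil, MonoidAlgebra.one_def, MonoidAlgebra.coeff_single] at hu
    have h := Finsupp.support_single_subset hu
    simp only [Finset.mem_singleton] at h
    subst h
    simp [FreeMonoid.toList_one]
  intro n
  induction n with
  | zero =>
      intro w hw
      have hw0 : w = [] := List.eq_nil_of_length_eq_zero (Nat.le_zero.mp hw)
      subst hw0; exact hnil
  | succ n ih =>
      intro w hw
      cases w with
      | nil => exact hnil
      | cons a w' =>
          intro u hu
          have h1 : w'.length ≤ n := by
            simp only [List.length_cons] at hw; omega
          have h2 : (w'.drop 1).length ≤ n := by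
            rw [List.length_drop]; omega
          rw [Ew_cons, MonoidAlgebra.coeff_sub] at hu
          have h3 := Finsupp.support_sub hu
          rw [Finset.mem_union] at h3
          rcases h3 with h3 | h3
          · have h4 := MonoidAlgebra.support_coeff_mul_subset _ _ h3
            rw [Finset.mem_mul] at h4
            obtain ⟨v, hv, z, hz, rfl⟩ := h4
            have hva := Finsupp.support_single_subset hv
            simp only [Finset.mem_singleton] at hva
            subst hva
            have hzl := ih w' h1 z hz
            rw [FreeMonoid.toList_mul, List.length_append, FreeMonoid.toList_of]
            simp only [List.length_cons, List.length_nil, List.length_cons]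
            omega
          · split at h3
            · have h4 := ih (w'.drop 1) h2 u h3
              rw [List.length_drop] at h4
              simp only [List.length_cons]
              omega
            · simp at h3

lemma Dmap_apply (m : MonoidAlgebra ℤ (FreeMonoid R)) :
    Dmap σ m = m.coeff.sum fun u c => c • Dw σ (FreeMonoid.toList u) :=
  Finsupp.linearCombination_apply _ _

lemma smul_MA_single (u : FreeMonoid R) (c : ℤ) :
    c • MonoidAlgebra.single u (1 : ℤ) = MonoidAlgebra.single u c := by
  simp [MonoidAlgebra.smul_single']

lemma Ew_one (a : R) : Ew σ [a] = MonoidAlgebra.single (FreeMonoid.of a) 1 := by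
  rw [Ew_cons, Ew_nil, mul_one, if_neg (by simp), sub_zero]

end Aux

/-- For `R = ℤ/2` (the involution `*` exchanging the two generators),
the ring `(ℤ[A], ⊙)` with Banică's product is isomorphic to the free unital
`ℤ`-algebra on two generators (the monoid ring of the free monoid on two generators
with concatenation), via a filtration-preserving isomorphism sending the two
generators to the generators. -/
theorem banica_ring_free (σ : ZMod 2 → ZMod 2) (hσ : σ = fun r => r + 1) :
    ∃ e : (List (ZMod 2) →₀ ℤ) ≃+ MonoidAlgebra ℤ (FreeMonoid (ZMod 2)),
      (∀ x y, e (odot σ x y) = e x * e y) ∧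
      e (Finsupp.single ([] : List (ZMod 2)) (1 : ℤ)) = 1 ∧
      e (Finsupp.single [(0 : ZMod 2)] (1 : ℤ)) =
        MonoidAlgebra.of ℤ (FreeMonoid (ZMod 2)) (FreeMonoid.of 0) ∧
      e (Finsupp.single [(1 : ZMod 2)] (1 : ℤ)) =
        MonoidAlgebra.of ℤ (FreeMonoid (ZMod 2)) (FreeMonoid.of 1) ∧
      (∀ (x : List (ZMod 2) →₀ ℤ) (n : ℕ),
        (∀ w ∈ x.support, w.length ≤ n) ↔
        (∀ w ∈ (e x).coeff.support, (FreeMonoid.toList w).length ≤ n)) := by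
  subst hσ
  letI : DecidableEq (FreeMonoid (ZMod 2)) := inferInstanceAs (DecidableEq (List (ZMod 2)))
  have hinv : Function.Involutive (fun r : ZMod 2 => r + 1) := by
    intro x; fin_cases x <;> rfl
  have hDE : ∀ x, Dmap (fun r : ZMod 2 => r + 1)
      (Finsupp.linearCombination ℤ (Ew (fun r : ZMod 2 => r + 1)) x) = x := by
    intro x
    have h : (Dmap (fun r : ZMod 2 => r + 1)).comp
        (Finsupp.linearCombination ℤ (Ew (fun r : ZMod 2 => r + 1))) = LinearMap.id := by
      refine Finsupp.lhom_ext fun w c => ?_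
      simp only [LinearMap.comp_apply, LinearMap.id_apply]
      rw [Finsupp.linearCombination_single, map_smul, DE hinv w.length w le_rfl,
        Finsupp.smul_single', mul_one]
    have := LinearMap.congr_fun h x
    simpa using this
  have hED : ∀ m, Finsupp.linearCombination ℤ (Ew (fun r : ZMod 2 => r + 1))
      (Dmap (fun r : ZMod 2 => r + 1) m) = m := by
    intro m
    have h : (Finsupp.linearCombination ℤ (Ew (fun r : ZMod 2 => r + 1))).comp
        (Dmap (fun r : ZMod 2 => r + 1)) = LinearMap.id := by
      refine MonoidAlgebra.lhom_ext' fun u => LinearMap.ext fun c => ?_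
      show Finsupp.linearCombination ℤ (Ew (fun r : ZMod 2 => r + 1))
          (Dmap (fun r : ZMod 2 => r + 1) (MonoidAlgebra.single u c)) = MonoidAlgebra.single u c
      rw [Dmap_fin_single, map_smul, ED hinv, FreeMonoid.ofList_toList, smul_MA_single]
    have := LinearMap.congr_fun h m
    simpa using this
  refine ⟨{ toFun := Finsupp.linearCombination ℤ (Ew (fun r : ZMod 2 => r + 1)),
            invFun := Dmap (fun r : ZMod 2 => r + 1),
            left_inv := hDE, right_inv := hED,
            map_add' := map_add _ }, ?_, ?_, ?_, ?_, ?_⟩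
  · intro x y
    simp only [AddEquiv.coe_mk, Equiv.coe_fn_mk]
    exact Emap_odot hinv x y
  · simp only [AddEquiv.coe_mk, Equiv.coe_fn_mk]
    rw [Finsupp.linearCombination_single, one_smul, Ew_nil]
  · simp only [AddEquiv.coe_mk, Equiv.coe_fn_mk]
    rw [Finsupp.linearCombination_single, one_smul, Ew_one, MonoidAlgebra.of_apply]
  · simp only [AddEquiv.coe_mk, Equiv.coe_fn_mk]
    rw [Finsupp.linearCombination_single, one_smul, Ew_one, MonoidAlgebra.of_apply]
  · intro x n
    simp only [AddEquiv.coe_mk, Equiv.coe_fn_mk]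
    constructor
    · intro hx u hu
      rw [Finsupp.linearCombination_apply, MonoidAlgebra.coeff_finsuppSum] at hu
      have h1 := Finsupp.support_sum hu
      rw [Finset.mem_biUnion] at h1
      obtain ⟨w, hw, hu2⟩ := h1
      simp only [MonoidAlgebra.coeff_smul] at hu2
      have hu3 := Finsupp.support_smul hu2
      exact le_trans (Ew_support w.length w le_rfl u hu3) (hx w hw)
    · intro he w hw
      rw [← hDE x, Dmap_apply] at hw
      have h1 := Finsupp.support_sum hw
      rw [Finset.mem_biUnion] at h1
      obtain ⟨u, hu, hw2⟩ := h1
      have hw3 := Finsupp.support_smul hw2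
      have h2 := Dw_support hinv (FreeMonoid.toList u) w hw3
      calc w.length ≤ (FreeMonoid.toList u).length := h2
        _ ≤ n := he u hu
end

section
/- With n ≥ 2 and a vector r = (r_1,…,r_k) of integers, define an r-configuration to be an assignment of symbols from {empty, '(', ')'} to positions 1,…,k such that: the parenthesis symbols form a balanced (grammatically correct) parenthesization; if a '(' at position i is matched with ')' at position j > i then r_j = r_i ± 1, and every position strictly between i and j carries a (matched) parenthesis. For a configuration c, let r_c be the vector obtained from r by deleting the parenthesized positions. Then the counting identity n^k = Σ_{c ∈ Conf_r} n_{r_c} holds, where n_s is the number of admissible sequences for s. -/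
/-- The admissibility constraint of the vector `r` at the adjacent pair of positions
`(i, i+1)`: if `r_{i+1} = r_i ± 1` then `(n_i, n_{i+1}) ≠ (n, n)` when `r_i` is even, and
`(n_i, n_{i+1}) ≠ (1, 1)` when `r_i` is odd (values in `Fin n` encode `{1, …, n}` via
`v ↦ v + 1`). -/
def admissibleAt (n : ℕ) {k : ℕ} (r : Fin k → ℤ) (ns : Fin k → Fin n)
    (i : ℕ) (h : i + 1 < k) : Prop :=
  (r ⟨i + 1, h⟩ = r ⟨i, Nat.lt_of_succ_lt h⟩ + 1 ∨
   r ⟨i + 1, h⟩ = r ⟨i, Nat.lt_of_succ_lt h⟩ - 1) →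
  ((Even (r ⟨i, Nat.lt_of_succ_lt h⟩) →
      ¬((ns ⟨i, Nat.lt_of_succ_lt h⟩ : ℕ) + 1 = n ∧ (ns ⟨i + 1, h⟩ : ℕ) + 1 = n)) ∧
   (Odd (r ⟨i, Nat.lt_of_succ_lt h⟩) →
      ¬((ns ⟨i, Nat.lt_of_succ_lt h⟩ : ℕ) = 0 ∧ (ns ⟨i + 1, h⟩ : ℕ) = 0)))

/-- A sequence `ns ∈ {1, …, n}^k` is admissible for `r` if the admissibility constraint
holds at every adjacent pair of positions. -/
def admissible (n : ℕ) {k : ℕ} (r : Fin k → ℤ) (ns : Fin k → Fin n) : Prop :=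
  ∀ (i : ℕ) (h : i + 1 < k), admissibleAt n r ns i h

/-- `n_r`: the number of admissible sequences for `r`. -/
noncomputable def nCount (n : ℕ) {k : ℕ} (r : Fin k → ℤ) : ℕ :=
  Nat.card {ns : Fin k → Fin n // admissible n r ns}

/-- An `r`-configuration, encoded by its partial matching `M` of positions: matched pairs
are the parenthesis pairs (`'('` at the smaller position, `')'` at the larger one), and
`M i = none` means position `i` carries the empty symbol. The conditions say: the
matching is symmetric and irreflexive; matched pairs are non-crossing (so the
parenthesization is grammatically correct); a matched pair `(i, j)` requires
`r_j = r_i ± 1`; and all positions strictly between a matched pair are themselves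
parenthesized. -/
def IsConfig {k : ℕ} (r : Fin k → ℤ) (M : Fin k → Option (Fin k)) : Prop :=
  (∀ i j, M i = some j → M j = some i) ∧
  (∀ i, M i ≠ some i) ∧
  (∀ i j l m, M i = some j → M l = some m → i < l → l < j → i < m ∧ m < j) ∧
  (∀ i j, M i = some j → r j = r i + 1 ∨ r j = r i - 1) ∧
  (∀ i j, M i = some j → ∀ l, i < l → l < j → (M l).isSome)

/-- The type of `r`-configurations. -/
abbrev Config {k : ℕ} (r : Fin k → ℤ) := {M : Fin k → Option (Fin k) // IsConfig r M}

/-- The set of unparenthesized (empty-symbol) positions of a configuration. -/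
def freePos {k : ℕ} {r : Fin k → ℤ} (c : Config r) : Finset (Fin k) :=
  Finset.univ.filter fun i => c.1 i = none

/-- The length of the reduced vector `r_c`. -/
def reducedLen {k : ℕ} {r : Fin k → ℤ} (c : Config r) : ℕ := (freePos c).card

/-- The reduced vector `r_c`: `r` with the parenthesized positions deleted. -/
def reducedVec {k : ℕ} {r : Fin k → ℤ} (c : Config r) : Fin (reducedLen c) → ℤ :=
  fun t => r ((freePos c).orderIsoOfFin rfl t).1

namespace CI

/-! ### Basic notions: bad values, steps, violations -/

def badv (n : ℕ) (x : ℤ) : ℕ := if Even x then n - 1 else 0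

lemma badv_lt {n : ℕ} (hn : 2 ≤ n) (x : ℤ) : badv n x < n := by
  unfold badv; split <;> omega

lemma badv_ne {n : ℕ} (hn : 2 ≤ n) {x y : ℤ} (h : y = x + 1 ∨ y = x - 1) :
    badv n x ≠ badv n y := by
  have hpar : ¬ (Even x ↔ Even y) := by
    have h1 := Int.even_add_one (n := x)
    have h2 := Int.even_add_one (n := y)
    rcases h with rfl | rfl
    · tauto
    · rw [show x - 1 + 1 = x by ring] at h2
      tauto
  unfold badv
  split_ifs with h1 h2 h2
  · exact absurd (iff_of_true h1 h2) hpar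
  · omega
  · omega
  · exact absurd (iff_of_false h1 h2) hpar

def Step {k : ℕ} (r : Fin k → ℤ) (i : ℕ) (h : i + 1 < k) : Prop :=
  r ⟨i + 1, h⟩ = r ⟨i, Nat.lt_of_succ_lt h⟩ + 1 ∨
  r ⟨i + 1, h⟩ = r ⟨i, Nat.lt_of_succ_lt h⟩ - 1

def Viol (n : ℕ) {k : ℕ} (r : Fin k → ℤ) (ns : Fin k → Fin n) (i : ℕ) (h : i + 1 < k) : Prop :=
  Step r i h ∧ (ns ⟨i, Nat.lt_of_succ_lt h⟩ : ℕ) = badv n (r ⟨i, Nat.lt_of_succ_lt h⟩) ∧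
    (ns ⟨i + 1, h⟩ : ℕ) = badv n (r ⟨i, Nat.lt_of_succ_lt h⟩)

lemma admissibleAt_iff_not_viol {n k : ℕ} (hn : 2 ≤ n) (r : Fin k → ℤ) (ns : Fin k → Fin n)
    (i : ℕ) (h : i + 1 < k) : admissibleAt n r ns i h ↔ ¬ Viol n r ns i h := by
  have hlt1 : (ns ⟨i, Nat.lt_of_succ_lt h⟩ : ℕ) < n := (ns _).isLt
  have hlt2 : (ns ⟨i + 1, h⟩ : ℕ) < n := (ns _).isLt
  constructor
  · rintro ha ⟨hs, h1, h2⟩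
    obtain ⟨he, ho⟩ := ha hs
    rcases Int.even_or_odd (r ⟨i, Nat.lt_of_succ_lt h⟩) with hev | hod
    · rw [badv, if_pos hev] at h1 h2
      exact he hev ⟨by omega, by omega⟩
    · have hne : ¬ Even (r ⟨i, Nat.lt_of_succ_lt h⟩) := by
        exact (Int.not_even_iff_odd).mpr hod
      rw [badv, if_neg hne] at h1 h2
      exact ho hod ⟨h1, h2⟩
  · intro hv hs
    constructor
    · rintro hev ⟨h1, h2⟩
      exact hv ⟨hs, by rw [badv, if_pos hev]; omega, by rw [badv, if_pos hev]; omega⟩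
    · rintro hod ⟨h1, h2⟩
      have hne : ¬ Even (r ⟨i, Nat.lt_of_succ_lt h⟩) := by
        exact (Int.not_even_iff_odd).mpr hod
      exact hv ⟨hs, by rw [badv, if_neg hne]; omega, by rw [badv, if_neg hne]; omega⟩

lemma mem_freePos {k : ℕ} {r : Fin k → ℤ} {c : Config r} {j : Fin k} :
    j ∈ freePos c ↔ c.1 j = none := by
  simp [freePos]

/-! ### The map Φ -/

variable {n k : ℕ}

def emb {k : ℕ} {r : Fin k → ℤ} (c : Config r) : Fin (reducedLen c) → Fin k :=
  fun u => ((freePos c).orderIsoOfFin rfl u).1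

lemma emb_mem {r : Fin k → ℤ} (c : Config r) (u : Fin (reducedLen c)) :
    emb c u ∈ freePos c := ((freePos c).orderIsoOfFin rfl u).2

lemma emb_none {r : Fin k → ℤ} (c : Config r) (u : Fin (reducedLen c)) :
    c.1 (emb c u) = none := mem_freePos.mp (emb_mem c u)

lemma emb_strictMono {r : Fin k → ℤ} (c : Config r) : StrictMono (emb c) := by
  intro a b h
  exact ((freePos c).orderIsoOfFin rfl).lt_iff_lt.mpr h

lemma emb_eq_orderEmbOfFin {r : Fin k → ℤ} (c : Config r) :
    emb c = (freePos c).orderEmbOfFin (k := reducedLen c) rfl := by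
  funext u
  exact Finset.coe_orderIsoOfFin_apply _ _ _

lemma emb_unique {r : Fin k → ℤ} (c : Config r) {f : Fin (reducedLen c) → Fin k}
    (hf : ∀ x, f x ∈ freePos c) (hm : StrictMono f) : f = emb c := by
  rw [emb_eq_orderEmbOfFin]
  exact Finset.orderEmbOfFin_unique rfl hf hm

lemma exists_emb_eq {r : Fin k → ℤ} (c : Config r) {j : Fin k} (hj : c.1 j = none) :
    ∃ u, emb c u = j := by
  have hmem : j ∈ freePos c := mem_freePos.mpr hj
  have : j ∈ Set.range ((freePos c).orderEmbOfFin (k := reducedLen c) rfl) := by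
    exact (Set.ext_iff.mp (Finset.range_orderEmbOfFin (freePos c) (k := reducedLen c) rfl) j).mpr hmem
  obtain ⟨u, hu⟩ := this
  exact ⟨u, by rw [emb_eq_orderEmbOfFin]; exact hu⟩

lemma reducedVec_eq {r : Fin k → ℤ} (c : Config r) (u : Fin (reducedLen c)) :
    reducedVec c u = r (emb c u) := rfl

def pairMin {r : Fin k → ℤ} (c : Config r) (j : Fin k) : Fin k :=
  match c.1 j with
  | none => j
  | some l => min j l

abbrev ConfData (n : ℕ) {k : ℕ} (r : Fin k → ℤ) : Type :=
  Σ c : Config r, {a : Fin (reducedLen c) → Fin n // admissible n (reducedVec c) a}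

def phi (hn : 2 ≤ n) {r : Fin k → ℤ} (p : ConfData n r) : Fin k → Fin n := fun j =>
  if h : p.1.1 j = none then
    p.2.1 (((freePos p.1).orderIsoOfFin rfl).symm
      ⟨j, Finset.mem_filter.mpr ⟨Finset.mem_univ j, h⟩⟩)
  else ⟨badv n (r (pairMin p.1 j)), badv_lt hn _⟩

lemma phi_matched (hn : 2 ≤ n) {r : Fin k → ℤ} (p : ConfData n r) {j l : Fin k}
    (h : p.1.1 j = some l) : (phi hn p j : ℕ) = badv n (r (min j l)) := by
  have hne : ¬ p.1.1 j = none := by simp [h]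
  have hpm : pairMin p.1 j = min j l := by unfold pairMin; rw [h]
  rw [phi, dif_neg hne]
  show badv n (r (pairMin p.1 j)) = badv n (r (min j l))
  rw [hpm]

lemma phi_free (hn : 2 ≤ n) {r : Fin k → ℤ} (p : ConfData n r)
    (u : Fin (reducedLen p.1)) :
    phi hn p (emb p.1 u) = p.2.1 u := by
  have h : p.1.1 (emb p.1 u) = none := emb_none _ _
  rw [phi, dif_pos h]
  have : (⟨emb p.1 u, Finset.mem_filter.mpr ⟨Finset.mem_univ _, h⟩⟩ :
      {x // x ∈ freePos p.1}) = (freePos p.1).orderIsoOfFin rfl u :=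
    Subtype.ext rfl
  rw [this]
  exact congrArg (fun x => p.2.1 x) (OrderIso.symm_apply_apply _ _)

/-! ### Existence of an adjacent (innermost) pair -/

lemma exists_adj_pair {r : Fin k → ℤ} (c : Config r) {i0 j0 : Fin k}
    (hne : c.1 i0 = some j0) :
    ∃ (i : ℕ) (h : i + 1 < k), c.1 ⟨i, Nat.lt_of_succ_lt h⟩ = some ⟨i + 1, h⟩ := by
  obtain ⟨hsymm, hirr, hcross, -, hint⟩ := c.2
  have key : ∀ d : ℕ, ∀ i j : Fin k, c.1 i = some j → i < j → (j : ℕ) - i ≤ d →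
      ∃ (i' : ℕ) (h : i' + 1 < k), c.1 ⟨i', Nat.lt_of_succ_lt h⟩ = some ⟨i' + 1, h⟩ := by
    intro d
    induction d using Nat.strong_induction_on with
    | _ d IH =>
      intro i j hij hlt hle
      rw [Fin.lt_def] at hlt
      by_cases hadj : (j : ℕ) = (i : ℕ) + 1
      · refine ⟨(i : ℕ), by omega, ?_⟩
        have e1 : (⟨(i : ℕ), Nat.lt_of_succ_lt (by omega)⟩ : Fin k) = i := Fin.ext rfl
        have e2 : (⟨(i : ℕ) + 1, by omega⟩ : Fin k) = j := Fin.ext hadj.symm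
        rw [e1, e2]; exact hij
      · have hik : (i : ℕ) + 1 < k := by have := j.isLt; omega
        set i1 : Fin k := ⟨(i : ℕ) + 1, hik⟩ with hi1
        have hv : (i1 : ℕ) = (i : ℕ) + 1 := rfl
        have hlt1 : i < i1 := by rw [Fin.lt_def, hv]; omega
        have hlt2 : i1 < j := by rw [Fin.lt_def, hv]; omega
        have hsome := hint i j hij i1 hlt1 hlt2
        obtain ⟨l, hl⟩ := Option.isSome_iff_exists.mp hsome
        obtain ⟨hl1, hl2⟩ := hcross i j i1 l hij hl hlt1 hlt2
        rw [Fin.lt_def] at hl1 hl2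
        have hlne : l ≠ i1 := fun h => hirr i1 (h ▸ hl)
        have hlval : (i1 : ℕ) < (l : ℕ) := by
          have hne' : (l : ℕ) ≠ (i1 : ℕ) := fun h => hlne (Fin.ext h)
          omega
        exact IH ((l : ℕ) - (i1 : ℕ)) (by omega) i1 l hl (Fin.lt_def.mpr hlval) (le_refl _)
  rcases lt_trichotomy i0 j0 with h | h | h
  · exact key _ i0 j0 hne h le_rfl
  · exact absurd hne (h ▸ hirr i0)
  · exact key _ j0 i0 (hsymm _ _ hne) h le_rfl

/-! ### Deleting two adjacent positions -/

section Del

variable {i : ℕ}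

def dele (hi : i + 1 < k) (t : Fin (k - 2)) : Fin k :=
  if h : (t : ℕ) < i then ⟨t, by omega⟩ else ⟨(t : ℕ) + 2, by have := t.isLt; omega⟩

lemma dele_val (hi : i + 1 < k) (t : Fin (k - 2)) :
    (dele hi t : ℕ) = if (t : ℕ) < i then (t : ℕ) else (t : ℕ) + 2 := by
  unfold dele; split <;> rfl

lemma dele_mk_val (hi : i + 1 < k) (v : ℕ) (hv : v < k - 2) :
    (dele hi ⟨v, hv⟩ : ℕ) = if v < i then v else v + 2 := dele_val hi _

lemma dele_strictMono (hi : i + 1 < k) : StrictMono (dele hi) := by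
  intro a b h
  rw [Fin.lt_def] at h ⊢
  rw [dele_val, dele_val]
  split_ifs <;> omega

lemma dele_lt_iff (hi : i + 1 < k) {a b : Fin (k - 2)} : dele hi a < dele hi b ↔ a < b :=
  (dele_strictMono hi).lt_iff_lt

lemma dele_inj (hi : i + 1 < k) : Function.Injective (dele hi) :=
  (dele_strictMono hi).injective

lemma dele_ne (hi : i + 1 < k) (t : Fin (k - 2)) :
    (dele hi t : ℕ) ≠ i ∧ (dele hi t : ℕ) ≠ i + 1 := by
  rw [dele_val]; have := t.isLt; split <;> omega

lemma dele_surj (hi : i + 1 < k) {j : Fin k} (h1 : (j : ℕ) ≠ i) (h2 : (j : ℕ) ≠ i + 1) :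
    ∃ t, dele hi t = j := by
  by_cases hj : (j : ℕ) < i
  · refine ⟨⟨(j : ℕ), by omega⟩, Fin.ext ?_⟩
    rw [dele_val]; simp [hj]
  · have hij : i + 1 < (j : ℕ) := by omega
    refine ⟨⟨(j : ℕ) - 2, by have := j.isLt; omega⟩, Fin.ext ?_⟩
    rw [dele_mk_val]; have := j.isLt; split <;> omega

def delinv (hi : i + 1 < k) (j : Fin k) : Option (Fin (k - 2)) :=
  if h : (j : ℕ) < i then some ⟨(j : ℕ), by omega⟩
  else if h2 : i + 1 < (j : ℕ) then some ⟨(j : ℕ) - 2, by have := j.isLt; omega⟩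
  else none

lemma delinv_dele (hi : i + 1 < k) (t : Fin (k - 2)) : delinv hi (dele hi t) = some t := by
  have := t.isLt
  by_cases hti : (t : ℕ) < i
  · have hv : (dele hi t : ℕ) = (t : ℕ) := by rw [dele_val]; simp [hti]
    rw [delinv, dif_pos (by omega : (dele hi t : ℕ) < i)]
    exact congrArg some (Fin.ext hv)
  · have hv : (dele hi t : ℕ) = (t : ℕ) + 2 := by rw [dele_val]; simp [hti]
    rw [delinv, dif_neg (by omega), dif_pos (by omega)]
    refine congrArg some (Fin.ext ?_)
    show (dele hi t : ℕ) - 2 = (t : ℕ)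
    omega

lemma dele_delinv (hi : i + 1 < k) {j : Fin k} {t : Fin (k - 2)}
    (h : delinv hi j = some t) : dele hi t = j := by
  have hjlt := j.isLt
  unfold delinv at h
  split_ifs at h with h1 h2
  · cases h
    apply Fin.ext; rw [dele_mk_val]; simp [h1]
  · cases h
    apply Fin.ext; rw [dele_mk_val]; split <;> omega

lemma delinv_eq_none (hi : i + 1 < k) {j : Fin k} :
    delinv hi j = none ↔ (j : ℕ) = i ∨ (j : ℕ) = i + 1 := by
  unfold delinv; split_ifs <;> simp <;> omega

/-! ### Restriction of a configuration -/

variable {r : Fin k → ℤ}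

lemma config_symm (c : Config r) {a b : Fin k} (h : c.1 a = some b) : c.1 b = some a :=
  c.2.1 a b h

lemma partner_ne (c : Config r) {hi : i + 1 < k}
    (hp : c.1 ⟨i, Nat.lt_of_succ_lt hi⟩ = some ⟨i + 1, hi⟩)
    {j l : Fin k} (hj1 : (j : ℕ) ≠ i) (hj2 : (j : ℕ) ≠ i + 1) (h : c.1 j = some l) :
    (l : ℕ) ≠ i ∧ (l : ℕ) ≠ i + 1 := by
  have hs : c.1 l = some j := config_symm c h
  constructor <;> intro he
  · have hl : l = ⟨i, Nat.lt_of_succ_lt hi⟩ := Fin.ext he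
    rw [hl, hp] at hs
    have hv := congrArg Fin.val (Option.some.inj hs)
    exact hj2 hv.symm
  · have hl : l = ⟨i + 1, hi⟩ := Fin.ext he
    have hp' : c.1 ⟨i + 1, hi⟩ = some ⟨i, Nat.lt_of_succ_lt hi⟩ := config_symm c hp
    rw [hl, hp'] at hs
    have := congrArg Fin.val (Option.some.inj hs)
    exact absurd this.symm hj1

def resM (hi : i + 1 < k) (c : Config r) : Fin (k - 2) → Option (Fin (k - 2)) :=
  fun t => (c.1 (dele hi t)).bind (delinv hi)

lemma resM_some_iff (hi : i + 1 < k) (c : Config r)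
    (hp : c.1 ⟨i, Nat.lt_of_succ_lt hi⟩ = some ⟨i + 1, hi⟩) {t t' : Fin (k - 2)} :
    resM hi c t = some t' ↔ c.1 (dele hi t) = some (dele hi t') := by
  constructor
  · intro h
    unfold resM at h
    cases hc : c.1 (dele hi t) with
    | none => rw [hc] at h; simp at h
    | some l =>
      rw [hc] at h
      simp only [Option.bind_some] at h
      exact congrArg some (dele_delinv hi h).symm
  · intro h
    unfold resM
    rw [h, Option.bind_some, delinv_dele]

lemma resM_none_iff (hi : i + 1 < k) (c : Config r)
    (hp : c.1 ⟨i, Nat.lt_of_succ_lt hi⟩ = some ⟨i + 1, hi⟩) {t : Fin (k - 2)} :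
    resM hi c t = none ↔ c.1 (dele hi t) = none := by
  cases hc : c.1 (dele hi t) with
  | none => unfold resM; rw [hc]; simp
  | some l =>
    unfold resM; rw [hc]
    simp only [Option.bind_some]
    constructor
    · intro h
      obtain ⟨hne1, hne2⟩ := partner_ne c hp (dele_ne hi t).1 (dele_ne hi t).2 hc
      rw [delinv_eq_none] at h
      tauto
    · intro h; exact absurd h (by simp)

lemma resM_recover (hi : i + 1 < k) (c : Config r)
    (hp : c.1 ⟨i, Nat.lt_of_succ_lt hi⟩ = some ⟨i + 1, hi⟩) (t : Fin (k - 2)) :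
    c.1 (dele hi t) = (resM hi c t).map (dele hi) := by
  cases hc : c.1 (dele hi t) with
  | none =>
    rw [(resM_none_iff hi c hp).mpr hc]; rfl
  | some l =>
    obtain ⟨hne1, hne2⟩ := partner_ne c hp (dele_ne hi t).1 (dele_ne hi t).2 hc
    obtain ⟨t', ht'⟩ := dele_surj hi hne1 hne2
    rw [(resM_some_iff hi c hp).mpr (by rw [hc, ht'])]
    rw [Option.map_some, ht']

lemma resM_isConfig (hi : i + 1 < k) (c : Config r)
    (hp : c.1 ⟨i, Nat.lt_of_succ_lt hi⟩ = some ⟨i + 1, hi⟩) :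
    IsConfig (r ∘ dele hi) (resM hi c) := by
  obtain ⟨hsymm, hirr, hcross, hrc, hint⟩ := c.2
  refine ⟨?_, ?_, ?_, ?_, ?_⟩
  · intro a b h
    rw [resM_some_iff hi c hp] at h ⊢
    exact hsymm _ _ h
  · intro a h
    rw [resM_some_iff hi c hp] at h
    exact hirr _ h
  · intro a b l m h1 h2 hab hlb
    rw [resM_some_iff hi c hp] at h1 h2
    have := hcross _ _ _ _ h1 h2 ((dele_lt_iff hi).mpr hab) ((dele_lt_iff hi).mpr hlb)
    exact ⟨(dele_lt_iff hi).mp this.1, (dele_lt_iff hi).mp this.2⟩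
  · intro a b h
    rw [resM_some_iff hi c hp] at h
    exact hrc _ _ h
  · intro a b h l hal hlb
    rw [resM_some_iff hi c hp] at h
    have hs := hint _ _ h (dele hi l) ((dele_lt_iff hi).mpr hal) ((dele_lt_iff hi).mpr hlb)
    obtain ⟨m, hm⟩ := Option.isSome_iff_exists.mp hs
    obtain ⟨hne1, hne2⟩ := partner_ne c hp (dele_ne hi l).1 (dele_ne hi l).2 hm
    obtain ⟨m', hm'⟩ := dele_surj hi hne1 hne2
    have : resM hi c l = some m' := (resM_some_iff hi c hp).mpr (by rw [hm, hm'])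
    rw [this]; rfl

def resC (hi : i + 1 < k) (c : Config r)
    (hp : c.1 ⟨i, Nat.lt_of_succ_lt hi⟩ = some ⟨i + 1, hi⟩) : Config (r ∘ dele hi) :=
  ⟨resM hi c, resM_isConfig hi c hp⟩
lemma freePos_resC (hi : i + 1 < k) (c : Config r)
    (hp : c.1 ⟨i, Nat.lt_of_succ_lt hi⟩ = some ⟨i + 1, hi⟩) :
    freePos c = (freePos (resC hi c hp)).image (dele hi) := by
  ext j
  rw [mem_freePos, Finset.mem_image]
  constructor
  · intro hj
    have hj1 : (j : ℕ) ≠ i := by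
      intro he
      rw [show j = ⟨i, Nat.lt_of_succ_lt hi⟩ from Fin.ext he, hp] at hj
      cases hj
    have hj2 : (j : ℕ) ≠ i + 1 := by
      intro he
      rw [show j = ⟨i + 1, hi⟩ from Fin.ext he, config_symm c hp] at hj
      cases hj
    obtain ⟨t, ht⟩ := dele_surj hi hj1 hj2
    exact ⟨t, mem_freePos.mpr ((resM_none_iff hi c hp).mpr (by rw [ht]; exact hj)), ht⟩
  · rintro ⟨t, htm, rfl⟩
    exact (resM_none_iff hi c hp).mp (mem_freePos.mp htm)

lemma reducedLen_resC (hi : i + 1 < k) (c : Config r)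
    (hp : c.1 ⟨i, Nat.lt_of_succ_lt hi⟩ = some ⟨i + 1, hi⟩) :
    reducedLen c = reducedLen (resC hi c hp) := by
  unfold reducedLen
  rw [freePos_resC hi c hp, Finset.card_image_of_injective _ (dele_inj hi)]

lemma emb_resC (hi : i + 1 < k) (c : Config r)
    (hp : c.1 ⟨i, Nat.lt_of_succ_lt hi⟩ = some ⟨i + 1, hi⟩)
    (u : Fin (reducedLen c)) :
    emb c u = dele hi (emb (resC hi c hp) (Fin.cast (reducedLen_resC hi c hp) u)) := by
  have hf : ∀ x : Fin (reducedLen c),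
      dele hi (emb (resC hi c hp) (Fin.cast (reducedLen_resC hi c hp) x)) ∈ freePos c := by
    intro x
    rw [freePos_resC hi c hp]
    exact Finset.mem_image_of_mem _ (emb_mem _ _)
  have hm : StrictMono fun x : Fin (reducedLen c) =>
      dele hi (emb (resC hi c hp) (Fin.cast (reducedLen_resC hi c hp) x)) := by
    intro a b hab
    refine (dele_strictMono hi) ((emb_strictMono _) (Fin.lt_def.mpr ?_))
    exact Fin.lt_def.mp hab
  have := emb_unique c hf hm
  exact (congrFun this u).symm

lemma reducedVec_resC (hi : i + 1 < k) (c : Config r)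
    (hp : c.1 ⟨i, Nat.lt_of_succ_lt hi⟩ = some ⟨i + 1, hi⟩) (u : Fin (reducedLen c)) :
    reducedVec c u = reducedVec (resC hi c hp) (Fin.cast (reducedLen_resC hi c hp) u) := by
  rw [reducedVec_eq, reducedVec_eq, emb_resC hi c hp]
  rfl

lemma admissible_cast {n k1 k2 : ℕ} (h : k1 = k2) (v : Fin k2 → ℤ) (a : Fin k2 → Fin n) :
    admissible n (fun u => v (Fin.cast h u)) (fun u => a (Fin.cast h u)) ↔ admissible n v a := by
  subst h
  exact Iff.rfl

lemma phi_resC {n : ℕ} (hn : 2 ≤ n) (hi : i + 1 < k) (c : Config r)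
    (hp : c.1 ⟨i, Nat.lt_of_succ_lt hi⟩ = some ⟨i + 1, hi⟩)
    (a : Fin (reducedLen c) → Fin n) (adm : admissible n (reducedVec c) a)
    (a' : Fin (reducedLen (resC hi c hp)) → Fin n)
    (adm' : admissible n (reducedVec (resC hi c hp)) a')
    (ha : ∀ u : Fin (reducedLen c), a u = a' (Fin.cast (reducedLen_resC hi c hp) u))
    (t : Fin (k - 2)) :
    phi hn (⟨resC hi c hp, ⟨a', adm'⟩⟩ : ConfData n (r ∘ dele hi)) t =
      phi hn (⟨c, ⟨a, adm⟩⟩ : ConfData n r) (dele hi t) := by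
  cases hcc : c.1 (dele hi t) with
  | some l =>
    obtain ⟨hne1, hne2⟩ := partner_ne c hp (dele_ne hi t).1 (dele_ne hi t).2 hcc
    obtain ⟨t', ht'⟩ := dele_surj hi hne1 hne2
    have hres : (resC hi c hp).1 t = some t' :=
      (resM_some_iff hi c hp).mpr (by rw [hcc, ht'])
    apply Fin.ext
    rw [phi_matched hn _ hres,
      phi_matched hn _ (show c.1 (dele hi t) = some (dele hi t') by rw [hcc, ht'])]
    have hmin : dele hi (min t t') = min (dele hi t) (dele hi t') :=
      (dele_strictMono hi).monotone.map_min
    show badv n (r (dele hi (min t t'))) = badv n (r (min (dele hi t) (dele hi t')))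
    rw [hmin]
  | none =>
    have hres : (resC hi c hp).1 t = none := (resM_none_iff hi c hp).mpr hcc
    obtain ⟨u, hu⟩ := exists_emb_eq (resC hi c hp) hres
    set v : Fin (reducedLen c) := Fin.cast (reducedLen_resC hi c hp).symm u with hv
    have hcast : Fin.cast (reducedLen_resC hi c hp) v = u := Fin.ext rfl
    have hev : emb c v = dele hi t := by
      rw [emb_resC hi c hp v, hcast, hu]
    rw [← hev, phi_free hn (⟨c, ⟨a, adm⟩⟩ : ConfData n r) v]
    rw [← hu, phi_free hn (⟨resC hi c hp, ⟨a', adm'⟩⟩ : ConfData n (r ∘ dele hi)) u]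
    show a' u = a v
    rw [ha v, hcast]


/-! ### Lifting a configuration by adding the pair (i, i+1) -/

def liftM (hi : i + 1 < k) (c' : Fin (k - 2) → Option (Fin (k - 2))) :
    Fin k → Option (Fin k) := fun j =>
  if (j : ℕ) = i then some ⟨i + 1, hi⟩
  else if (j : ℕ) = i + 1 then some ⟨i, Nat.lt_of_succ_lt hi⟩
  else (delinv hi j).bind (fun t => (c' t).map (dele hi))

lemma liftM_at_i (hi : i + 1 < k) (c' : Fin (k - 2) → Option (Fin (k - 2))) :
    liftM hi c' ⟨i, Nat.lt_of_succ_lt hi⟩ = some ⟨i + 1, hi⟩ := by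
  unfold liftM; rw [if_pos rfl]

lemma liftM_at_i1 (hi : i + 1 < k) (c' : Fin (k - 2) → Option (Fin (k - 2))) :
    liftM hi c' ⟨i + 1, hi⟩ = some ⟨i, Nat.lt_of_succ_lt hi⟩ := by
  unfold liftM
  rw [if_neg (show ¬ ((⟨i + 1, hi⟩ : Fin k) : ℕ) = i by show ¬ (i + 1 = i); omega),
    if_pos rfl]

lemma liftM_dele (hi : i + 1 < k) (c' : Fin (k - 2) → Option (Fin (k - 2)))
    (t : Fin (k - 2)) : liftM hi c' (dele hi t) = (c' t).map (dele hi) := by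
  obtain ⟨h1, h2⟩ := dele_ne hi t
  unfold liftM
  rw [if_neg h1, if_neg h2, delinv_dele, Option.bind_some]

lemma liftM_some_iff (hi : i + 1 < k) (c' : Fin (k - 2) → Option (Fin (k - 2)))
    {j l : Fin k} : liftM hi c' j = some l ↔
      (j = ⟨i, Nat.lt_of_succ_lt hi⟩ ∧ l = ⟨i + 1, hi⟩) ∨
      (j = ⟨i + 1, hi⟩ ∧ l = ⟨i, Nat.lt_of_succ_lt hi⟩) ∨
      ∃ t t', dele hi t = j ∧ dele hi t' = l ∧ c' t = some t' := by
  constructor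
  · intro h
    unfold liftM at h
    split_ifs at h with h1 h2
    · exact Or.inl ⟨Fin.ext h1, (Option.some.inj h).symm⟩
    · exact Or.inr (Or.inl ⟨Fin.ext h2, (Option.some.inj h).symm⟩)
    · right; right
      obtain ⟨t, ht⟩ := dele_surj hi h1 h2
      rw [← ht, delinv_dele, Option.bind_some] at h
      cases hct : c' t with
      | none => rw [hct] at h; simp at h
      | some t' =>
        rw [hct] at h
        simp only [Option.map_some] at h
        exact ⟨t, t', ht, Option.some.inj h, hct⟩
  · rintro (⟨rfl, rfl⟩ | ⟨rfl, rfl⟩ | ⟨t, t', rfl, rfl, hct⟩)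
    · exact liftM_at_i hi c'
    · exact liftM_at_i1 hi c'
    · rw [liftM_dele hi c' t, hct]; rfl

lemma liftM_isConfig (hi : i + 1 < k) (hstep : Step r i hi) (c' : Config (r ∘ dele hi)) :
    IsConfig r (liftM hi c'.1) := by
  obtain ⟨hsymm, hirr, hcross, hrc, hint⟩ := c'.2
  have hfi : ((⟨i, Nat.lt_of_succ_lt hi⟩ : Fin k) : ℕ) = i := rfl
  have hfi1 : ((⟨i + 1, hi⟩ : Fin k) : ℕ) = i + 1 := rfl
  refine ⟨?_, ?_, ?_, ?_, ?_⟩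
  · -- symmetry
    intro a b h
    rcases (liftM_some_iff hi c'.1).mp h with ⟨rfl, rfl⟩ | ⟨rfl, rfl⟩ | ⟨t, t', rfl, rfl, hct⟩
    · exact liftM_at_i1 hi c'.1
    · exact liftM_at_i hi c'.1
    · rw [liftM_dele hi c'.1 t', hsymm t t' hct]; rfl
  · -- irreflexivity
    intro a h
    rcases (liftM_some_iff hi c'.1).mp h with ⟨rfl, he⟩ | ⟨rfl, he⟩ | ⟨t, t', h1, h2, hct⟩
    · have : i = i + 1 := congrArg Fin.val he
      omega
    · have : i + 1 = i := congrArg Fin.val he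
      omega
    · have : t = t' := dele_inj hi (h1.trans h2.symm)
      exact hirr t (this ▸ hct)
  · -- non-crossing
    intro a b l m hab hlm h1 h2
    rcases (liftM_some_iff hi c'.1).mp hab with ⟨rfl, rfl⟩ | ⟨rfl, rfl⟩ |
        ⟨ta, tb, rfl, rfl, hctab⟩ <;>
      rcases (liftM_some_iff hi c'.1).mp hlm with ⟨rfl, rfl⟩ | ⟨rfl, rfl⟩ |
        ⟨tl, tm, rfl, rfl, hctlm⟩
    · exfalso; rw [Fin.lt_def] at h1 h2; omega
    · exfalso; rw [Fin.lt_def] at h1 h2; omega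
    · exfalso; rw [Fin.lt_def] at h1 h2
      have := (dele_ne hi tl).1; have := (dele_ne hi tl).2; omega
    · exfalso; rw [Fin.lt_def] at h1 h2; omega
    · exfalso; rw [Fin.lt_def] at h1 h2; omega
    · exfalso; rw [Fin.lt_def] at h1 h2
      have := (dele_ne hi tl).1; have := (dele_ne hi tl).2; omega
    · -- outer old pair, inner (i, i+1)
      rw [Fin.lt_def] at h1 h2
      have ha1 := (dele_ne hi ta).1; have ha2 := (dele_ne hi ta).2
      have hb1 := (dele_ne hi tb).1; have hb2 := (dele_ne hi tb).2
      constructor <;> rw [Fin.lt_def] <;> omega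
    · -- outer old pair, inner (i+1, i)
      rw [Fin.lt_def] at h1 h2
      have ha1 := (dele_ne hi ta).1; have ha2 := (dele_ne hi ta).2
      have hb1 := (dele_ne hi tb).1; have hb2 := (dele_ne hi tb).2
      constructor <;> rw [Fin.lt_def] <;> omega
    · -- both old
      have hc := hcross ta tb tl tm hctab hctlm ((dele_lt_iff hi).mp h1) ((dele_lt_iff hi).mp h2)
      exact ⟨(dele_lt_iff hi).mpr hc.1, (dele_lt_iff hi).mpr hc.2⟩
  · -- r-condition
    intro a b hab
    rcases (liftM_some_iff hi c'.1).mp hab with ⟨rfl, rfl⟩ | ⟨rfl, rfl⟩ |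
        ⟨ta, tb, rfl, rfl, hct⟩
    · exact hstep
    · rcases hstep with h | h
      · right; omega
      · left; omega
    · exact hrc ta tb hct
  · -- interior
    intro a b hab l h1 h2
    rcases (liftM_some_iff hi c'.1).mp hab with ⟨rfl, rfl⟩ | ⟨rfl, rfl⟩ |
        ⟨ta, tb, rfl, rfl, hct⟩
    · exfalso; rw [Fin.lt_def] at h1 h2; omega
    · exfalso; rw [Fin.lt_def] at h1 h2; omega
    · by_cases hl1 : (l : ℕ) = i
      · unfold liftM; rw [if_pos hl1]; rfl
      · by_cases hl2 : (l : ℕ) = i + 1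
        · unfold liftM; rw [if_neg hl1, if_pos hl2]; rfl
        · obtain ⟨tl, htl⟩ := dele_surj hi hl1 hl2
          rw [← htl] at h1 h2
          have := hint ta tb hct tl ((dele_lt_iff hi).mp h1) ((dele_lt_iff hi).mp h2)
          obtain ⟨tm, htm⟩ := Option.isSome_iff_exists.mp this
          rw [← htl, liftM_dele hi c'.1 tl, htm]
          rfl

def liftC (hi : i + 1 < k) (hstep : Step r i hi) (c' : Config (r ∘ dele hi)) : Config r :=
  ⟨liftM hi c'.1, liftM_isConfig hi hstep c'⟩

lemma liftC_pair (hi : i + 1 < k) (hstep : Step r i hi) (c' : Config (r ∘ dele hi)) :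
    (liftC hi hstep c').1 ⟨i, Nat.lt_of_succ_lt hi⟩ = some ⟨i + 1, hi⟩ :=
  liftM_at_i hi c'.1

lemma resC_liftC (hi : i + 1 < k) (hstep : Step r i hi) (c' : Config (r ∘ dele hi)) :
    resC hi (liftC hi hstep c') (liftC_pair hi hstep c') = c' := by
  apply Subtype.ext
  funext t
  show resM hi (liftC hi hstep c') t = c'.1 t
  unfold resM
  rw [show (liftC hi hstep c').1 (dele hi t) = (c'.1 t).map (dele hi) from
    liftM_dele hi c'.1 t]
  cases hct : c'.1 t with
  | none => rfl
  | some t' => simp [delinv_dele hi]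


/-! ### Rigidity: a violation of Φ(p) forces the pair (i, i+1) in p -/

lemma emb_consec {r : Fin k → ℤ} (c : Config r) {i : ℕ} (hi : i + 1 < k)
    (h1 : c.1 ⟨i, Nat.lt_of_succ_lt hi⟩ = none) (h2 : c.1 ⟨i + 1, hi⟩ = none) :
    ∃ (t : ℕ) (ht : t + 1 < reducedLen c),
      emb c ⟨t, Nat.lt_of_succ_lt ht⟩ = ⟨i, Nat.lt_of_succ_lt hi⟩ ∧
      emb c ⟨t + 1, ht⟩ = ⟨i + 1, hi⟩ := by
  obtain ⟨u, hu⟩ := exists_emb_eq c h1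
  obtain ⟨u', hu'⟩ := exists_emb_eq c h2
  have huv : (emb c u : ℕ) = i := by rw [hu]
  have huv' : (emb c u' : ℕ) = i + 1 := by rw [hu']
  have hlt : u < u' := by
    refine (emb_strictMono c).lt_iff_lt.mp ?_
    rw [Fin.lt_def]; omega
  rw [Fin.lt_def] at hlt
  have hsucc : (u' : ℕ) = (u : ℕ) + 1 := by
    by_contra hne
    have hw : (u : ℕ) + 1 < reducedLen c := by have := u'.isLt; omega
    set w : Fin (reducedLen c) := ⟨(u : ℕ) + 1, hw⟩ with hwdef
    have hw1 : u < w := by rw [Fin.lt_def]; exact Nat.lt_succ_self _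
    have hw2 : w < u' := by rw [Fin.lt_def]; show (u : ℕ) + 1 < (u' : ℕ); omega
    have e1 := (emb_strictMono c) hw1
    have e2 := (emb_strictMono c) hw2
    rw [Fin.lt_def] at e1 e2
    omega
  refine ⟨(u : ℕ), by have := u'.isLt; omega, ?_, ?_⟩
  · rw [show (⟨(u : ℕ), _⟩ : Fin (reducedLen c)) = u from Fin.ext rfl]
    exact hu
  · rw [show (⟨(u : ℕ) + 1, _⟩ : Fin (reducedLen c)) = u' from Fin.ext hsucc.symm]
    exact hu'

lemma rigidity {n : ℕ} (hn : 2 ≤ n) {r : Fin k → ℤ} (p : ConfData n r) {i : ℕ}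
    (hi : i + 1 < k) (hv : Viol n r (phi hn p) i hi) :
    p.1.1 ⟨i, Nat.lt_of_succ_lt hi⟩ = some ⟨i + 1, hi⟩ := by
  obtain ⟨hstep, hv1, hv2⟩ := hv
  set fi : Fin k := ⟨i, Nat.lt_of_succ_lt hi⟩ with hfidef
  set fi1 : Fin k := ⟨i + 1, hi⟩ with hfi1def
  have hfiv : (fi : ℕ) = i := rfl
  have hfi1v : (fi1 : ℕ) = i + 1 := rfl
  have hbne : badv n (r fi) ≠ badv n (r fi1) := badv_ne hn hstep
  have hirr := p.1.2.2.1
  have hsymm := p.1.2.1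
  have hcross := p.1.2.2.2.1
  have hrc := p.1.2.2.2.2.1
  have hint := p.1.2.2.2.2.2
  cases hc : p.1.1 fi with
  | some j =>
    rcases lt_trichotomy j fi with hj | hj | hj
    · exfalso
      have hmin : min fi j = j := min_eq_right (le_of_lt hj)
      have := phi_matched hn p hc
      rw [hmin] at this
      rw [this] at hv1
      exact badv_ne hn (hrc fi j hc) hv1.symm
    · exact absurd hc (hj ▸ hirr fi)
    · by_cases hj1 : (j : ℕ) = i + 1
      · exact congrArg some (Fin.ext hj1)
      · exfalso
        rw [Fin.lt_def, hfiv] at hj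
        have hfij : fi < fi1 := by rw [Fin.lt_def]; omega
        have hfi1j : fi1 < j := by rw [Fin.lt_def, hfi1v]; omega
        have hsl := hint fi j hc fi1 hfij hfi1j
        obtain ⟨l, hl⟩ := Option.isSome_iff_exists.mp hsl
        obtain ⟨hl1, hl2⟩ := hcross fi j fi1 l hc hl hfij hfi1j
        have hlne : l ≠ fi1 := fun h => hirr fi1 (h ▸ hl)
        rw [Fin.lt_def, hfiv] at hl1
        have hlval : i + 1 < (l : ℕ) := by
          have : (l : ℕ) ≠ i + 1 := fun h => hlne (Fin.ext h)
          omega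
        have hmin : min fi1 l = fi1 := min_eq_left (by rw [Fin.le_def, hfi1v]; omega)
        have := phi_matched hn p hl
        rw [hmin] at this
        rw [this] at hv2
        exact hbne hv2.symm
  | none =>
    cases hc1 : p.1.1 fi1 with
    | some l =>
      exfalso
      have hlne : l ≠ fi := by
        intro h
        rw [h] at hc1
        rw [hsymm fi1 fi hc1] at hc
        cases hc
      rcases lt_trichotomy l fi1 with hl | hl | hl
      · have hlval : (l : ℕ) < i := by
          rw [Fin.lt_def, hfi1v] at hl
          have : (l : ℕ) ≠ i := fun h => hlne (Fin.ext h)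
          omega
        have hs := hint l fi1 (hsymm fi1 l hc1) fi (by rw [Fin.lt_def, hfiv]; omega)
          (by rw [Fin.lt_def, hfiv, hfi1v]; omega)
        rw [hc] at hs
        simp at hs
      · exact hirr fi1 (hl ▸ hc1)
      · have hmin : min fi1 l = fi1 := min_eq_left (le_of_lt hl)
        have := phi_matched hn p hc1
        rw [hmin] at this
        rw [this] at hv2
        exact hbne hv2.symm
    | none =>
      exfalso
      obtain ⟨t, ht, het, het1⟩ := emb_consec p.1 hi hc hc1
      have hadm := p.2.2 t ht
      rw [admissibleAt_iff_not_viol hn] at hadm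
      apply hadm
      have hr1 : reducedVec p.1 ⟨t, Nat.lt_of_succ_lt ht⟩ = r fi := by
        rw [reducedVec_eq, het]
      have hr2 : reducedVec p.1 ⟨t + 1, ht⟩ = r fi1 := by
        rw [reducedVec_eq, het1]
      refine ⟨?_, ?_, ?_⟩
      · show Step (reducedVec p.1) t ht
        unfold Step
        rw [hr1, hr2]
        exact hstep
      · rw [hr1]
        have := phi_free hn p ⟨t, Nat.lt_of_succ_lt ht⟩
        rw [het] at this
        rw [← this]
        exact hv1
      · rw [hr1]
        have := phi_free hn p ⟨t + 1, ht⟩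
        rw [het1] at this
        rw [← this]
        exact hv2


/-! ### Adjacent pairs of a configuration are violations of Φ -/

lemma pair_viol {n : ℕ} (hn : 2 ≤ n) {r : Fin k → ℤ} (p : ConfData n r) {i : ℕ}
    {hi : i + 1 < k} (hp : p.1.1 ⟨i, Nat.lt_of_succ_lt hi⟩ = some ⟨i + 1, hi⟩) :
    Viol n r (phi hn p) i hi := by
  set fi : Fin k := ⟨i, Nat.lt_of_succ_lt hi⟩
  set fi1 : Fin k := ⟨i + 1, hi⟩
  have hle : fi ≤ fi1 := by rw [Fin.le_def]; exact Nat.le_succ i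
  have hp' : p.1.1 fi1 = some fi := config_symm p.1 hp
  refine ⟨p.1.2.2.2.2.1 fi fi1 hp, ?_, ?_⟩
  · rw [phi_matched hn p hp, min_eq_left hle]
  · rw [phi_matched hn p hp', min_eq_right hle]

/-! ### The empty configuration -/

def emptyC (r : Fin k → ℤ) : Config r :=
  ⟨fun _ => none,
    fun _ _ h => by simp at h,
    fun _ h => by simp at h,
    fun _ _ _ _ h => by simp at h,
    fun _ _ h => by simp at h,
    fun _ _ h => by simp at h⟩

lemma freePos_emptyC (r : Fin k → ℤ) : freePos (emptyC r) = Finset.univ := by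
  ext j; simp [freePos, emptyC]

lemma reducedLen_emptyC (r : Fin k → ℤ) : reducedLen (emptyC r) = k := by
  unfold reducedLen
  rw [freePos_emptyC]
  simp

lemma emb_emptyC (r : Fin k → ℤ) (u : Fin (reducedLen (emptyC r))) :
    emb (emptyC r) u = Fin.cast (reducedLen_emptyC r) u := by
  have hf : ∀ x : Fin (reducedLen (emptyC r)),
      Fin.cast (reducedLen_emptyC r) x ∈ freePos (emptyC r) := by
    intro x; rw [freePos_emptyC]; exact Finset.mem_univ _
  have hm : StrictMono fun x : Fin (reducedLen (emptyC r)) =>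
      Fin.cast (reducedLen_emptyC r) x := by
    intro a b hab
    rw [Fin.lt_def]
    exact Fin.lt_def.mp hab
  exact (congrFun (emb_unique (emptyC r) hf hm) u).symm

/-! ### Congruence helpers -/

lemma reducedVec_congr {r : Fin k → ℤ} {c₁ c₂ : Config r} (h : c₁ = c₂)
    (x : Fin (reducedLen c₁)) :
    reducedVec c₁ x = reducedVec c₂ (Fin.cast (congrArg reducedLen h) x) := by
  subst h; rfl

lemma phi_congr {n : ℕ} (hn : 2 ≤ n) {r : Fin k → ℤ} {c₁ c₂ : Config r} (h : c₁ = c₂)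
    {a₁ : Fin (reducedLen c₁) → Fin n} {adm₁ : admissible n (reducedVec c₁) a₁}
    {a₂ : Fin (reducedLen c₂) → Fin n} {adm₂ : admissible n (reducedVec c₂) a₂}
    (ha : ∀ u, a₁ u = a₂ (Fin.cast (congrArg reducedLen h) u)) :
    phi hn (⟨c₁, ⟨a₁, adm₁⟩⟩ : ConfData n r) = phi hn (⟨c₂, ⟨a₂, adm₂⟩⟩ : ConfData n r) := by
  subst h
  have haa : a₁ = a₂ := funext fun u => (ha u).trans (congrArg a₂ (Fin.ext rfl))
  subst haa
  rfl

/-! ### The main bijectivity theorem -/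

theorem key {n : ℕ} (hn : 2 ≤ n) : ∀ (k : ℕ) (r : Fin k → ℤ) (ns : Fin k → Fin n),
    ∃! p : ConfData n r, phi hn p = ns := by
  intro k
  induction k using Nat.strong_induction_on with
  | _ k IH =>
    intro r ns
    by_cases hv : ∃ (i : ℕ) (hi : i + 1 < k), Viol n r ns i hi
    · -- violation case
      obtain ⟨i, hi, hviol⟩ := hv
      have hstep : Step r i hi := hviol.1
      obtain ⟨⟨c', a', adm'⟩, hphi', huniq⟩ :=
        IH (k - 2) (by omega) (r ∘ dele hi) (fun t => ns (dele hi t))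
      set cL : Config r := liftC hi hstep c' with hcldef
      have hpL : cL.1 ⟨i, Nat.lt_of_succ_lt hi⟩ = some ⟨i + 1, hi⟩ :=
        liftC_pair hi hstep c'
      have hres : resC hi cL hpL = c' := resC_liftC hi hstep c'
      have hlenEq : reducedLen (resC hi cL hpL) = reducedLen c' := congrArg reducedLen hres
      have hlenL : reducedLen cL = reducedLen (resC hi cL hpL) := reducedLen_resC hi cL hpL
      set a'res : Fin (reducedLen (resC hi cL hpL)) → Fin n :=
        fun x => a' (Fin.cast hlenEq x) with haresdef
      have adm'res : admissible n (reducedVec (resC hi cL hpL)) a'res := by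
        have hvec : reducedVec (resC hi cL hpL) =
            fun x => reducedVec c' (Fin.cast hlenEq x) :=
          funext fun x => reducedVec_congr hres x
        rw [hvec]
        exact (admissible_cast hlenEq (reducedVec c') a').mpr adm'
      set aL : Fin (reducedLen cL) → Fin n := fun u => a'res (Fin.cast hlenL u) with haldef
      have admL : admissible n (reducedVec cL) aL := by
        have hvec : reducedVec cL =
            fun u => reducedVec (resC hi cL hpL) (Fin.cast hlenL u) :=
          funext fun u => reducedVec_resC hi cL hpL u
        rw [hvec]
        exact (admissible_cast hlenL (reducedVec (resC hi cL hpL)) a'res).mpr adm'res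
      have hphires : phi hn (⟨resC hi cL hpL, ⟨a'res, adm'res⟩⟩ : ConfData n (r ∘ dele hi)) =
          fun t => ns (dele hi t) := by
        rw [phi_congr hn hres (fun u => congrArg a' (Fin.ext rfl))]
        exact hphi'
      have hphiL : phi hn (⟨cL, ⟨aL, admL⟩⟩ : ConfData n r) = ns := by
        funext j
        by_cases hj1 : (j : ℕ) = i
        · rw [show j = ⟨i, Nat.lt_of_succ_lt hi⟩ from Fin.ext hj1]
          apply Fin.ext
          rw [phi_matched hn _ hpL,
            min_eq_left (by rw [Fin.le_def]; exact Nat.le_succ i), hviol.2.1]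
        · by_cases hj2 : (j : ℕ) = i + 1
          · rw [show j = ⟨i + 1, hi⟩ from Fin.ext hj2]
            apply Fin.ext
            rw [phi_matched hn _ (config_symm cL hpL),
              min_eq_right (by rw [Fin.le_def]; exact Nat.le_succ i), hviol.2.2]
          · obtain ⟨t, rfl⟩ := dele_surj hi hj1 hj2
            rw [← phi_resC hn hi cL hpL aL admL a'res adm'res (fun u => rfl) t]
            rw [hphires]
      refine ⟨⟨cL, ⟨aL, admL⟩⟩, hphiL, ?_⟩
      rintro ⟨c, a, adm⟩ hq
      have hviolq : Viol n r (phi hn (⟨c, ⟨a, adm⟩⟩ : ConfData n r)) i hi := by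
        rw [hq]; exact hviol
      have hpair : c.1 ⟨i, Nat.lt_of_succ_lt hi⟩ = some ⟨i + 1, hi⟩ :=
        rigidity hn _ hi hviolq
      set ares : Fin (reducedLen (resC hi c hpair)) → Fin n :=
        fun x => a (Fin.cast (reducedLen_resC hi c hpair).symm x) with haresdef2
      have admres : admissible n (reducedVec (resC hi c hpair)) ares := by
        have hvec : reducedVec (resC hi c hpair) =
            fun x => reducedVec c (Fin.cast (reducedLen_resC hi c hpair).symm x) := by
          funext x
          rw [reducedVec_resC hi c hpair (Fin.cast (reducedLen_resC hi c hpair).symm x)]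
          exact congrArg _ (Fin.ext rfl)
        rw [hvec]
        exact (admissible_cast (reducedLen_resC hi c hpair).symm
          (reducedVec c) a).mpr adm
      have hphir : phi hn (⟨resC hi c hpair, ⟨ares, admres⟩⟩ : ConfData n (r ∘ dele hi)) =
          fun t => ns (dele hi t) := by
        funext t
        rw [phi_resC hn hi c hpair a adm ares admres
          (fun u => (congrArg a (Fin.ext rfl)).symm) t]
        rw [hq]
      have hsig := huniq ⟨resC hi c hpair, ⟨ares, admres⟩⟩ hphir
      have hcfg : resC hi c hpair = c' := congrArg Sigma.fst hsig
      have hceq : c = cL := by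
        apply Subtype.ext
        funext j
        by_cases hj1 : (j : ℕ) = i
        · rw [show j = ⟨i, Nat.lt_of_succ_lt hi⟩ from Fin.ext hj1]
          show c.1 _ = cL.1 _
          rw [hpair, hpL]
        · by_cases hj2 : (j : ℕ) = i + 1
          · rw [show j = ⟨i + 1, hi⟩ from Fin.ext hj2]
            show c.1 _ = cL.1 _
            rw [config_symm c hpair, config_symm cL hpL]
          · obtain ⟨t, rfl⟩ := dele_surj hi hj1 hj2
            show c.1 _ = cL.1 _
            rw [resM_recover hi c hpair t, resM_recover hi cL hpL t]
            rw [show resM hi c t = (resC hi c hpair).1 t from rfl,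
              show resM hi cL t = (resC hi cL hpL).1 t from rfl, hcfg, hres]
      subst hceq
      refine congrArg (Sigma.mk cL) (Subtype.ext (funext fun u => ?_))
      show a u = aL u
      have h1 := phi_free hn (⟨cL, ⟨a, adm⟩⟩ : ConfData n r) u
      rw [hq] at h1
      have h2 := phi_free hn (⟨cL, ⟨aL, admL⟩⟩ : ConfData n r) u
      rw [hphiL] at h2
      exact h1.symm.trans h2
    · -- no violation case
      have hadm : admissible n r ns := fun i h =>
        (admissibleAt_iff_not_viol hn r ns i h).mpr (fun hvi => hv ⟨i, h, hvi⟩)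
      set a₀ : Fin (reducedLen (emptyC r)) → Fin n :=
        fun u => ns (Fin.cast (reducedLen_emptyC r) u) with ha0def
      have adm₀ : admissible n (reducedVec (emptyC r)) a₀ := by
        have hvec : reducedVec (emptyC r) =
            fun u => r (Fin.cast (reducedLen_emptyC r) u) :=
          funext fun u => by rw [reducedVec_eq, emb_emptyC]
        rw [hvec]
        exact (admissible_cast (reducedLen_emptyC r) r ns).mpr hadm
      have hphi0 : phi hn (⟨emptyC r, ⟨a₀, adm₀⟩⟩ : ConfData n r) = ns := by
        funext j
        obtain ⟨u, hu⟩ := exists_emb_eq (emptyC r) (show (emptyC r).1 j = none from rfl)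
        rw [← hu, phi_free hn (⟨emptyC r, ⟨a₀, adm₀⟩⟩ : ConfData n r) u]
        show a₀ u = ns (emb (emptyC r) u)
        rw [emb_emptyC]
      refine ⟨⟨emptyC r, ⟨a₀, adm₀⟩⟩, hphi0, ?_⟩
      rintro ⟨c, a, adm⟩ hq
      have hM : ∀ j, c.1 j = none := by
        intro j
        by_contra hne
        obtain ⟨l, hl⟩ := Option.ne_none_iff_exists'.mp hne
        obtain ⟨i', hi', hp⟩ := exists_adj_pair c hl
        have hviol := pair_viol hn (⟨c, ⟨a, adm⟩⟩ : ConfData n r) hp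
        rw [hq] at hviol
        exact hv ⟨i', hi', hviol⟩
      have hc : c = emptyC r := Subtype.ext (funext hM)
      subst hc
      refine congrArg (Sigma.mk (emptyC r)) (Subtype.ext (funext fun u => ?_))
      show a u = a₀ u
      have h1 := phi_free hn (⟨emptyC r, ⟨a, adm⟩⟩ : ConfData n r) u
      rw [hq] at h1
      exact h1.symm.trans (congrArg ns (emb_emptyC r u))

end Del

end CI

/-- the counting identity `n^k = Σ_{c ∈ Conf_r} n_{r_c}`. -/
theorem count_identity (n : ℕ) (hn : 2 ≤ n) (k : ℕ) (r : Fin k → ℤ) :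
    n ^ k = ∑ᶠ c : Config r, nCount n (reducedVec c) := by
  classical
  have hbij : Function.Bijective (CI.phi hn (r := r)) :=
    (Function.bijective_iff_existsUnique _).mpr (CI.key hn k r)
  have hcard : Nat.card (CI.ConfData n r) = Nat.card (Fin k → Fin n) :=
    Nat.card_eq_of_bijective _ hbij
  letI : Fintype (Config r) := Fintype.ofFinite _
  letI : ∀ c : Config r,
      Fintype {a : Fin (reducedLen c) → Fin n // admissible n (reducedVec c) a} :=
    fun c => Fintype.ofFinite _
  have h1 : n ^ k = Nat.card (Fin k → Fin n) := by
    rw [Nat.card_eq_fintype_card, Fintype.card_fun, Fintype.card_fin, Fintype.card_fin]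
  have h2 : Nat.card (CI.ConfData n r) = ∑ c : Config r, nCount n (reducedVec c) := by
    rw [show CI.ConfData n r = (Σ c : Config r,
      {a : Fin (reducedLen c) → Fin n // admissible n (reducedVec c) a}) from rfl]
    rw [Nat.card_eq_fintype_card, Fintype.card_sigma]
    exact Finset.sum_congr rfl fun c _ => Nat.card_eq_fintype_card.symm
  rw [h1, ← hcard, h2, finsum_eq_sum_of_fintype]
end

section
/- Transitivity of configurations: let r be an integer vector and c an r-configuration in which position i holds '(' matched with ')' at position i+1. Let d be the r-configuration consisting only of that pair at positions i, i+1, and let d' be the r_d-configuration consisting of all remaining symbols of c (after deleting positions i, i+1). Then d' is a valid r_d-configuration and r_c = (r_d)_{d'}. -/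
/-- transitivity of configurations: if in an `r`-configuration `c`
position `i` holds `'('` matched with `')'` at position `i+1`, let `d` be the
`r`-configuration consisting only of that pair, and let `d'` be the assignment on the
positions of `r_d` given by the remaining symbols of `c`. Then `d` and `d'` are valid
configurations and `r_c = (r_d)_{d'}`. -/
theorem config_transitivity {k : ℕ} (r : Fin k → ℤ) (c : Config r)
    (i : Fin k) (hi : (i : ℕ) + 1 < k)
    (hpair : c.1 i = some ⟨(i : ℕ) + 1, hi⟩) :
    ∃ hd : IsConfig r (fun l =>
        if l = i then some ⟨(i : ℕ) + 1, hi⟩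
        else if l = ⟨(i : ℕ) + 1, hi⟩ then some i else none),
      let d : Config r := ⟨_, hd⟩
      ∃ hd' : IsConfig (reducedVec d) (fun t =>
          (c.1 (((freePos d).orderIsoOfFin rfl t).1)).bind fun j =>
            if hj : j ∈ freePos d then
              some (((freePos d).orderIsoOfFin rfl).symm ⟨j, hj⟩) else none),
        let d' : Config (reducedVec d) := ⟨_, hd'⟩
        reducedLen c = reducedLen d' ∧
        ∀ (t : Fin (reducedLen c)) (t' : Fin (reducedLen d')),
          (t : ℕ) = (t' : ℕ) → reducedVec c t = reducedVec d' t' := by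
  obtain ⟨hsym, hirr, hcross, hedge, hbet⟩ := c.2
  set i1 : Fin k := ⟨(i : ℕ) + 1, hi⟩ with hi1def
  have hlt : i < i1 := by simp [hi1def, Fin.lt_def]
  have hne : i ≠ i1 := ne_of_lt hlt
  have hpair' : c.1 i1 = some i := hsym _ _ hpair
  -- d is a config
  have hM : ∀ a b : Fin k,
      ((if a = i then some i1 else if a = i1 then some i else none) = some b) ↔
      ((a = i ∧ b = i1) ∨ (a = i1 ∧ b = i)) := by
    intro a b
    by_cases ha : a = i
    · subst ha
      rw [if_pos rfl]
      simp only [Option.some_inj, eq_self_iff_true, true_and, hne, false_and, or_false]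
      exact eq_comm
    · by_cases ha1 : a = i1
      · subst ha1
        rw [if_neg ha, if_pos rfl]
        simp only [Option.some_inj, eq_self_iff_true, true_and, ha, false_and, false_or]
        exact eq_comm
      · simp [ha, ha1]
  have hd : IsConfig r (fun l =>
      if l = i then some i1 else if l = i1 then some i else none) := by
    refine ⟨?_, ?_, ?_, ?_, ?_⟩
    · intro a b hab
      rw [show ((fun l => if l = i then some i1 else if l = i1 then some i else none) a
          = some b) ↔ _ from hM a b] at hab
      rw [show ((fun l => if l = i then some i1 else if l = i1 then some i else none) b
          = some a) ↔ _ from hM b a]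
      tauto
    · intro a hab
      rw [show ((fun l => if l = i then some i1 else if l = i1 then some i else none) a
          = some a) ↔ _ from hM a a] at hab
      rcases hab with ⟨rfl, h⟩ | ⟨rfl, h⟩
      · exact hne h
      · exact hne h.symm
    · intro a b l m hab hlm h1 h2
      rw [show ((fun l => if l = i then some i1 else if l = i1 then some i else none) a
          = some b) ↔ _ from hM a b] at hab
      rw [show ((fun x => if x = i then some i1 else if x = i1 then some i else none) l
          = some m) ↔ _ from hM l m] at hlm
      exfalso
      rcases hab with ⟨rfl, rfl⟩ | ⟨rfl, rfl⟩ <;>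
        rcases hlm with ⟨rfl, rfl⟩ | ⟨rfl, rfl⟩ <;>
        simp only [Fin.lt_def, hi1def] at h1 h2 hlt ⊢ <;> omega
    · intro a b hab
      rw [show ((fun l => if l = i then some i1 else if l = i1 then some i else none) a
          = some b) ↔ _ from hM a b] at hab
      rcases hab with ⟨rfl, rfl⟩ | ⟨rfl, rfl⟩
      · exact hedge _ _ hpair
      · rcases hedge _ _ hpair with h | h
        · right; omega
        · left; omega
    · intro a b hab l h1 h2
      rw [show ((fun l => if l = i then some i1 else if l = i1 then some i else none) a
          = some b) ↔ _ from hM a b] at hab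
      exfalso
      rcases hab with ⟨rfl, rfl⟩ | ⟨rfl, rfl⟩ <;>
        simp only [Fin.lt_def, hi1def] at h1 h2 ⊢ <;> omega
  refine ⟨hd, ?_⟩
  intro d
  -- basic facts about d
  have hmemd : ∀ l : Fin k, l ∈ freePos d ↔ (l ≠ i ∧ l ≠ i1) := by
    intro l
    simp only [freePos, Finset.mem_filter, Finset.mem_univ, true_and, d]
    constructor
    · intro h
      constructor <;> intro hl <;> simp [hl, hne, hne.symm] at h
    · rintro ⟨h1, h2⟩; simp [h1, h2]
  set e := (freePos d).orderIsoOfFin (rfl : (freePos d).card = reducedLen d) with he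
  -- free positions never matched to i or i1 by c
  have hnotpair : ∀ l : Fin k, l ∈ freePos d → ∀ j, c.1 l = some j → j ∈ freePos d := by
    intro l hl j hcl
    rw [hmemd] at hl ⊢
    constructor
    · rintro rfl
      have := hsym _ _ hcl
      rw [hpair] at this
      exact hl.2 (Option.some_inj.mp this).symm
    · rintro rfl
      have := hsym _ _ hcl
      rw [hpair'] at this
      exact hl.1 (Option.some_inj.mp this).symm
  set D' : Fin (reducedLen d) → Option (Fin (reducedLen d)) := (fun t =>
          (c.1 ((e t).1)).bind fun j =>
            if hj : j ∈ freePos d then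
              some (e.symm ⟨j, hj⟩) else none) with hD'
  have hD'app : ∀ t, D' t = (c.1 ((e t).1)).bind
      (fun j => if hj : j ∈ freePos d then some (e.symm ⟨j, hj⟩) else none) :=
    fun t => rfl
  have hD'some : ∀ t u, D' t = some u ↔ c.1 ((e t).1) = some ((e u).1) := by
    intro t u
    rw [hD'app]
    constructor
    · intro h
      replace h := Option.bind_eq_some_iff.mp h
      obtain ⟨j, hj1, hj2⟩ := h
      split at hj2
      · next hj =>
        replace hj2 := Option.some_inj.mp hj2
        rw [hj1, ← hj2]
        congr 1
        simp
      · exact absurd hj2 (by simp)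
    · intro h
      rw [h, Option.bind_some, dif_pos (e u).2]
      exact congrArg some (e.symm_apply_apply u)
  have hestrict : StrictMono (fun t => (e t).1) :=
    fun a b hab => e.strictMono hab
  have hD'config : IsConfig (reducedVec d) D' := by
    refine ⟨?_, ?_, ?_, ?_, ?_⟩
    · intro t u h
      rw [hD'some] at h ⊢
      exact hsym _ _ h
    · intro t h
      rw [hD'some] at h
      exact hirr _ h
    · intro t u l m h1 h2 h3 h4
      rw [hD'some] at h1 h2
      have := hcross _ _ _ _ h1 h2 (hestrict h3) (hestrict h4)
      constructor
      · have := this.1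
        exact e.lt_iff_lt.mp (by exact this)
      · exact e.lt_iff_lt.mp (by exact this.2)
    · intro t u h
      rw [hD'some] at h
      exact hedge _ _ h
    · intro t u h l h1 h2
      rw [hD'some] at h
      have hsome := hbet _ _ h (e l).1 (hestrict h1) (hestrict h2)
      rw [Option.isSome_iff_exists] at hsome
      obtain ⟨j, hj⟩ := hsome
      have hjfree : j ∈ freePos d := hnotpair _ (e l).2 _ hj
      rw [hD'app, hj, Option.bind_some, dif_pos hjfree]
      rfl
  refine ⟨hD'config, ?_⟩
  intro d'
  -- free positions of d' correspond to free positions of c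
  have hfreec : ∀ l : Fin k, l ∈ freePos c ↔ c.1 l = none := by
    intro l; simp [freePos]
  have hfree' : ∀ t, t ∈ freePos d' ↔ c.1 ((e t).1) = none := by
    intro t
    simp only [freePos, Finset.mem_filter, Finset.mem_univ, true_and]
    show D' t = none ↔ _
    rw [hD'app]
    constructor
    · intro h
      by_contra hc
      obtain ⟨j, hj⟩ := Option.ne_none_iff_exists'.mp hc
      have hjfree : j ∈ freePos d := hnotpair _ (e t).2 _ hj
      replace h := Option.bind_eq_none_iff.mp h
      simpa [hjfree] using h j hj
    · intro h
      refine Option.bind_eq_none_iff.mpr ?_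
      exact fun a ha => absurd (ha.symm.trans h) (Option.some_ne_none a)
  have hsubd : ∀ l : Fin k, l ∈ freePos c → l ∈ freePos d := by
    intro l hl
    rw [hfreec] at hl
    rw [hmemd]
    constructor <;> rintro rfl <;> simp [hpair, hpair'] at hl
  have hcard' : (freePos c).card = reducedLen d' := by
    refine Finset.card_bij' (fun a ha => e.symm ⟨a, hsubd a ha⟩)
      (fun b hb => (e b).1) ?_ ?_ ?_ ?_
    · intro a ha
      refine (hfree' (e.symm ⟨a, hsubd a ha⟩)).mpr ?_
      simpa using (hfreec a).mp ha
    · intro b hb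
      rw [hfreec]
      exact (hfree' b).mp hb
    · intro a ha; simp
    · intro b hb; exact e.symm_apply_apply b
  have hcard : reducedLen c = reducedLen d' := hcard'
  refine ⟨hcard, ?_⟩
  intro t t' htt
  -- identify enumerations
  set e' := (freePos d').orderIsoOfFin (rfl : (freePos d').card = reducedLen d') with he'
  have hf : (fun t'' : Fin (reducedLen d') => (e ((e' t'').1)).1) =
      (freePos c).orderEmbOfFin hcard' := by
    apply Finset.orderEmbOfFin_unique
    · intro x
      rw [hfreec]
      exact (hfree' _).mp (e' x).2
    · intro a b hab
      exact hestrict (e'.strictMono hab)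
  have hft' : (e ((e' t').1)).1 = (freePos c).orderEmbOfFin hcard' t' := congrFun hf t'
  show r (((freePos c).orderIsoOfFin rfl) t).1 = r ((e ((e' t').1)).1)
  rw [show (((freePos c).orderIsoOfFin rfl) t).1 = (freePos c).orderEmbOfFin rfl t from rfl, hft']
  congr 1
  exact Finset.orderEmbOfFin_eq_orderEmbOfFin_iff.mpr htt
end
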